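/- arXiv:1510.01762 — 4 statements merged into one kernel-verified Lean document; each statement's English description precedes it below -/
import Mathlib

section
/- Let H be a complex Hilbert space. Let T be a bounded self-adjoint operator on H such that either T or -T is coercive, and set σ = 1 if T is coercive and σ = -1 if -T is coercive. Let T₁ be a compact self-adjoint operator on H, and let T₂ be a compact self-adjoint operator on H such that σ·Re⟨T₂u, u⟩ ≥ 0 for all u ∈ H. Then the set S = {k ∈ ℝ : k > 0 and there exists u ∈ H, u ≠ 0, with T u + k² T₁ u + k⁴ T₂ u = 0} has no accumulation point in ℝ (so S is at most countable and discrete, with +∞ as its only possible accumulation point), and for every k ∈ S the solution space {u ∈ H : T u + k² T₁ u + k⁴ T₂ u = 0} is a finite-dimensional subspace of H. -/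
open scoped InnerProductSpace

set_option synthInstance.maxHeartbeats 1000000
set_option maxHeartbeats 2000000

/-- A bounded operator on a complex Hilbert space is coercive if
`Re⟪A u, u⟫ ≥ c ‖u‖²` for some `c > 0` and all `u`. -/
def OpCoercive {H : Type*} [NormedAddCommGroup H] [InnerProductSpace ℂ H]
    (A : H →L[ℂ] H) : Prop :=
  ∃ c : ℝ, 0 < c ∧ ∀ u : H, c * ‖u‖ ^ 2 ≤ (inner ℂ (A u) u : ℂ).re

section Aux

variable {H : Type*} [NormedAddCommGroup H] [InnerProductSpace ℂ H] [CompleteSpace H]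

lemma compact_no_eigenseq {E : Type*} [NormedAddCommGroup E] [InnerProductSpace ℂ E]
    (M : E →L[ℂ] E) (hM : IsCompactOperator M) (μ : ℕ → ℂ) (hμinj : Function.Injective μ)
    (δ : ℝ) (hδ : 0 < δ) (hμδ : ∀ n, δ ≤ ‖μ n‖)
    (w : ℕ → E) (hw0 : ∀ n, w n ≠ 0) (hMw : ∀ n, M (w n) = μ n • w n) : False := by
  classical
  have hli : LinearIndependent ℂ w :=
    Module.End.eigenvectors_linearIndependent' (M.toLinearMap : Module.End ℂ E) μ hμinj w
      (fun n => ⟨Module.End.mem_eigenspace_iff.mpr (by simpa using hMw n), hw0 n⟩)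
  set V : ℕ → Submodule ℂ E := fun n => Submodule.span ℂ (w '' Set.Iic n) with hV
  have hmono : ∀ {m n : ℕ}, m ≤ n → V m ≤ V n := fun {m n} h =>
    Submodule.span_mono (Set.image_mono (Set.Iic_subset_Iic.mpr h))
  have hwmem : ∀ {j n : ℕ}, j ≤ n → w j ∈ V n := fun {j n} h =>
    Submodule.subset_span ⟨j, h, rfl⟩
  have hfd : ∀ n, FiniteDimensional ℂ (V n) := fun n =>
    FiniteDimensional.span_of_finite ℂ ((Set.finite_Iic n).image w)
  have hnotmem : ∀ n, w (n+1) ∉ V n := by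
    intro n hmem
    exact hli.notMem_span_image (x := n+1) (s := Set.Iic n) (by simp) hmem
  haveI : ∀ n, CompleteSpace (V n) := fun n => by
    haveI := hfd n; exact FiniteDimensional.complete ℂ (V n)
  -- the almost-orthogonal sequence
  set d : ℕ → E := fun n => w (n+1) - ((V n).orthogonalProjectionOnto (w (n+1)) : E) with hd
  have hd0 : ∀ n, d n ≠ 0 := by
    intro n h
    apply hnotmem n
    have : w (n+1) = ((V n).orthogonalProjectionOnto (w (n+1)) : E) := by
      have := sub_eq_zero.mp h; exact this
    rw [this]; exact SetLike.coe_mem _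
  set x : ℕ → E := fun n => (‖d n‖ : ℂ)⁻¹ • d n with hx
  have hx1 : ∀ n, ‖x n‖ = 1 := by
    intro n
    rw [hx]; simp only [norm_smul]
    rw [norm_inv]
    simp [norm_ne_zero_iff.mpr (hd0 n)]
  have hxE : ∀ n, x n ∈ V (n+1) := by
    intro n
    apply Submodule.smul_mem
    exact Submodule.sub_mem _ (hwmem (le_refl (n+1)))
      (hmono (Nat.le_succ n) (SetLike.coe_mem _))
  have hxperp : ∀ n, x n ∈ (V n)ᗮ := by
    intro n
    exact Submodule.smul_mem _ _ (Submodule.sub_starProjection_mem_orthogonal _)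
  -- M maps V n to V n
  have hMmap : ∀ n, ∀ y ∈ V n, M y ∈ V n := by
    intro n y hy
    induction hy using Submodule.span_induction with
    | mem z hz =>
      obtain ⟨j, hj, rfl⟩ := hz
      rw [hMw j]; exact Submodule.smul_mem _ _ (hwmem hj)
    | zero => simp
    | add a b _ _ ha hb => rw [map_add]; exact Submodule.add_mem _ ha hb
    | smul c a _ ha => rw [map_smul]; exact Submodule.smul_mem _ _ ha
  have hMμmap : ∀ n, ∀ y ∈ V (n+1), M y - μ (n+1) • y ∈ V n := by
    intro n y hy
    induction hy using Submodule.span_induction with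
    | mem z hz =>
      obtain ⟨j, hj, rfl⟩ := hz
      rw [hMw j, ← sub_smul]
      rcases Nat.lt_or_ge j (n+1) with h | h
      · exact Submodule.smul_mem _ _ (hwmem (Nat.lt_succ_iff.mp h))
      · have : j = n+1 := le_antisymm hj h
        rw [this]; simp
    | zero => simp
    | add a b _ _ ha hb =>
      rw [map_add, smul_add]
      have h2 : M a + M b - (μ (n+1) • a + μ (n+1) • b)
          = (M a - μ (n+1) • a) + (M b - μ (n+1) • b) := by abel
      rw [h2]; exact Submodule.add_mem _ ha hb
    | smul c a _ ha =>
      rw [map_smul, smul_comm]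
      have h2 : c • M a - c • (μ (n+1) • a) = c • (M a - μ (n+1) • a) := by rw [smul_sub]
      rw [h2]; exact Submodule.smul_mem _ _ ha
  -- key separation estimate
  have hsep : ∀ m n, m < n → δ ≤ ‖M (x n) - M (x m)‖ := by
    intro m n hmn
    set z : E := (μ (n+1) • x n - M (x n)) + M (x m) with hz
    have hzmem : z ∈ V n := by
      apply Submodule.add_mem
      · have h3 := hMμmap n (x n) (hxE n)
        have h4 : μ (n+1) • x n - M (x n) = -(M (x n) - μ (n+1) • x n) := by abel
        rw [h4]; exact Submodule.neg_mem _ h3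
      · exact hMmap n _ (hmono (by omega) (hxE m))
    have hkey : M (x n) - M (x m) = μ (n+1) • x n - z := by rw [hz]; abel
    have hinner : (inner ℂ (μ (n+1) • x n) z : ℂ) = 0 := by
      have := (Submodule.mem_orthogonal (V n) (x n)).mp (hxperp n) z hzmem
      rw [inner_smul_left]
      have h5 : (inner ℂ (x n) z : ℂ) = 0 := by
        rw [← inner_conj_symm, this, map_zero]
      rw [h5, mul_zero]
    have hpyth : ‖μ (n+1) • x n - z‖ ^ 2 = ‖μ (n+1) • x n‖ ^ 2 + ‖z‖ ^ 2 := by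
      rw [@norm_sub_sq ℂ]
      rw [hinner]
      simp
    have hn1 : ‖μ (n+1) • x n‖ = ‖μ (n+1)‖ := by rw [norm_smul, hx1, mul_one]
    have hge : δ ^ 2 ≤ ‖M (x n) - M (x m)‖ ^ 2 := by
      rw [hkey, hpyth, hn1]
      have := hμδ (n+1)
      nlinarith [norm_nonneg z, norm_nonneg (μ (n+1)), hδ.le]
    nlinarith [norm_nonneg (M (x n) - M (x m)), hδ.le]
  -- contradiction with compactness
  obtain ⟨K, hK, hKmem⟩ := hM
  obtain ⟨r, hr, hball⟩ := Metric.mem_nhds_iff.mp hKmem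
  set y : ℕ → E := fun n => M (((r/2 : ℝ) : ℂ) • x n) with hy
  have hyK : ∀ n, y n ∈ K := by
    intro n
    apply hball
    rw [Metric.mem_ball, dist_zero_right, norm_smul, hx1, mul_one, Complex.norm_real,
      Real.norm_eq_abs, abs_of_pos (by linarith)]
    linarith
  obtain ⟨L, _, φ, hφ, hconv⟩ := hK.tendsto_subseq hyK
  have hcauchy := hconv.cauchySeq
  rw [Metric.cauchySeq_iff] at hcauchy
  obtain ⟨N, hN⟩ := hcauchy (r/2 * δ) (by positivity)
  have h6 := hN (N+1) (by omega) N (le_refl N)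
  have hlt : φ N < φ (N+1) := hφ (by omega)
  have h7 : dist (y (φ (N+1))) (y (φ N)) = (r/2) * ‖M (x (φ (N+1))) - M (x (φ N))‖ := by
    rw [dist_eq_norm, hy]
    simp only [map_smul]
    rw [← smul_sub, norm_smul, Complex.norm_real, Real.norm_eq_abs, abs_of_pos (by linarith)]
  rw [Function.comp_apply, Function.comp_apply, h7] at h6
  have h8 := hsep (φ N) (φ (N+1)) hlt
  have : (r/2) * δ ≤ (r/2) * ‖M (x (φ (N+1))) - M (x (φ N))‖ := by
    apply mul_le_mul_of_nonneg_left h8; linarith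
  linarith

lemma sqrt_norm_sq_le (A : H →L[ℂ] H) (hpos : 0 ≤ A) (w : H) :
    ‖CFC.sqrt A w‖ ^ 2 ≤ ‖A w‖ * ‖w‖ := by
  set Q := CFC.sqrt A with hQ
  have hQsa : IsSelfAdjoint Q := IsSelfAdjoint.of_nonneg (CFC.sqrt_nonneg A)
  have hQQ : Q (Q w) = A w := by
    have : Q * Q = A := CFC.sqrt_mul_sqrt_self A hpos
    rw [← this]; rfl
  have h2 : (inner ℂ (Q (Q w)) w : ℂ) = inner ℂ (Q w) (Q w) := by
    have h3 := ContinuousLinearMap.adjoint_inner_left Q w (Q w)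
    rw [hQsa.adjoint_eq] at h3; exact h3
  have h1 : ‖Q w‖ ^ 2 = (inner ℂ (Q (Q w)) w : ℂ).re := by
    rw [h2, ← RCLike.re_to_complex]; exact (inner_self_eq_norm_sq (𝕜 := ℂ) (Q w)).symm
  rw [h1, hQQ]
  have h4 := Complex.abs_re_le_norm (inner ℂ (A w) w : ℂ)
  exact le_trans (le_trans (le_abs_self _) h4) (norm_inner_le_norm _ _)

lemma sqrt_isCompact (A : H →L[ℂ] H) (hpos : 0 ≤ A) (hA : IsCompactOperator (⇑A : H → H)) :
    IsCompactOperator (⇑(CFC.sqrt A) : H → H) := by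
  classical
  set Q := CFC.sqrt A with hQ
  have hAtb : TotallyBounded (A '' Metric.ball 0 1) :=
    ((hA.isCompact_closure_image_ball (𝕜₁ := ℂ) 1).totallyBounded).subset subset_closure
  have hQtb : TotallyBounded (Q '' Metric.ball 0 1) := by
    rw [Metric.totallyBounded_iff]
    intro ε hε
    have hε' : (0:ℝ) < ε ^ 2 / 4 := by positivity
    obtain ⟨t, hts, htf, hcov⟩ :=
      totallyBounded_iff_subset.mp hAtb _ (Metric.dist_mem_uniformity hε')
    haveI : Finite ↑t := htf.to_subtype
    choose g hg1 hg2 using fun (y : t) => hts y.2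
    refine ⟨(fun (y : t) => Q (g y)) '' Set.univ, (Set.finite_univ.image _), ?_⟩
    rintro - ⟨v, hv, rfl⟩
    obtain ⟨y, hyt, hy⟩ := Set.mem_iUnion₂.mp (hcov (Set.mem_image_of_mem A hv))
    refine Set.mem_iUnion₂.mpr ⟨Q (g ⟨y, hyt⟩), ⟨⟨y, hyt⟩, Set.mem_univ _, rfl⟩, ?_⟩
    rw [Metric.mem_ball, dist_eq_norm]
    set u' := g ⟨y, hyt⟩ with hu'
    have hub : u' ∈ Metric.ball (0:H) 1 := hg1 _
    have hdy : dist (A v) y < ε ^ 2 / 4 := hy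
    have hAu' : A u' = y := hg2 _
    have hsq : ‖Q (v - u')‖ ^ 2 ≤ ‖A (v - u')‖ * ‖v - u'‖ := sqrt_norm_sq_le A hpos _
    have e1 : Q (v - u') = Q v - Q u' := map_sub Q v u'
    have e2 : A (v - u') = A v - A u' := map_sub A v u'
    rw [e1, e2, hAu'] at hsq
    have hb1 : ‖A v - y‖ < ε ^ 2 / 4 := by rwa [← dist_eq_norm]
    have hb2 : ‖v - u'‖ ≤ 2 := by
      have hv1 : ‖v‖ < 1 := by simpa [Metric.mem_ball, dist_zero_right] using hv
      have hv2 : ‖u'‖ < 1 := by simpa [Metric.mem_ball, dist_zero_right] using hub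
      calc ‖v - u'‖ ≤ ‖v‖ + ‖u'‖ := norm_sub_le _ _
        _ ≤ 2 := by linarith
    have hsq2 : ‖Q v - Q u'‖ ^ 2 < ε ^ 2 := by
      calc ‖Q v - Q u'‖ ^ 2 ≤ ‖A v - y‖ * ‖v - u'‖ := hsq
        _ ≤ ‖A v - y‖ * 2 := by
            apply mul_le_mul_of_nonneg_left hb2 (norm_nonneg _)
        _ < ε ^ 2 / 4 * 2 := by
            apply mul_lt_mul_of_pos_right hb1; norm_num
        _ < ε ^ 2 := by nlinarith
    nlinarith [norm_nonneg (Q v - Q u'), hε]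
  refine ⟨closure (Q '' Metric.ball 0 1), TotallyBounded.isCompact_of_isClosed
    hQtb.closure isClosed_closure, ?_⟩
  have hss : Metric.ball (0:H) 1 ⊆ Q ⁻¹' closure (Q '' Metric.ball 0 1) := fun u hu =>
    subset_closure (Set.mem_image_of_mem Q hu)
  exact Filter.mem_of_superset (Metric.ball_mem_nhds 0 one_pos) hss

lemma exists_inverse (T : H →L[ℂ] H) (hc : OpCoercive T) :
    ∃ S : H →L[ℂ] H, (∀ u, S (T u) = u) ∧ (∀ u, T (S u) = u) := by
  obtain ⟨c, hc0, hcle⟩ := hc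
  have hunit : IsUnit T := by
    apply ContinuousLinearMap.isUnit_of_forall_le_norm_inner_map T (c := ⟨c, hc0.le⟩)
      (by exact_mod_cast hc0)
    intro x
    have h1 : (c : ℝ) * ‖x‖ ^ 2 ≤ (inner ℂ (T x) x : ℂ).re := hcle x
    have h2 : (inner ℂ (T x) x : ℂ).re ≤ ‖(inner ℂ (T x) x : ℂ)‖ := by
      have := Complex.abs_re_le_norm (inner ℂ (T x) x : ℂ)
      exact le_trans (le_abs_self _) this
    calc ‖x‖ ^ 2 * (⟨c, hc0.le⟩ : NNReal) = c * ‖x‖ ^ 2 := by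
          simp [mul_comm]
      _ ≤ ‖(inner ℂ (T x) x : ℂ)‖ := le_trans h1 h2
  obtain ⟨u, hu⟩ := hunit
  refine ⟨↑u⁻¹, fun x => ?_, fun x => ?_⟩
  · rw [← hu, ← ContinuousLinearMap.mul_apply, u.inv_mul]; rfl
  · rw [← hu, ← ContinuousLinearMap.mul_apply, u.mul_inv]; rfl

lemma ker_findim (T T₁ T₂ : H →L[ℂ] H) (hc : OpCoercive T) (hT₁c : IsCompactOperator (⇑T₁ : H → H))
    (hT₂c : IsCompactOperator (⇑T₂ : H → H)) (a b : ℂ) :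
    FiniteDimensional ℂ (LinearMap.ker ((T + a • T₁ + b • T₂ : H →L[ℂ] H) : H →ₗ[ℂ] H)) := by
  obtain ⟨S, hS1, hS2⟩ := exists_inverse T hc
  set C : H →L[ℂ] H := -(a • (S.comp T₁) + b • (S.comp T₂)) with hC
  have hCc : IsCompactOperator (⇑C : H → H) := by
    have h1 : IsCompactOperator (⇑(S.comp T₁) : H → H) := hT₁c.clm_comp S
    have h2 : IsCompactOperator (⇑(S.comp T₂) : H → H) := hT₂c.clm_comp S
    have heq : (⇑C : H → H) = -((a • (⇑(S.comp T₁) : H → H)) + (b • (⇑(S.comp T₂) : H → H))) := by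
      funext x; simp [hC]
    rw [heq]
    exact ((h1.smul a).add (h2.smul b)).neg
  set K := LinearMap.ker ((T + a • T₁ + b • T₂ : H →L[ℂ] H) : H →ₗ[ℂ] H) with hKdef
  have hfix : ∀ v : H, v ∈ K → C v = v := by
    intro v hv
    have hv0 : T v + a • T₁ v + b • T₂ v = 0 := by
      have := LinearMap.mem_ker.mp hv
      simpa using this
    have hmv : T v = -(a • T₁ v + b • T₂ v) := by
      have h9 := hv0
      rw [add_assoc] at h9
      exact eq_neg_of_add_eq_zero_left h9
    have h6 : S (T v) = v := hS1 v
    rw [hmv] at h6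
    have h8 : S (-(a • T₁ v + b • T₂ v)) = -(a • S (T₁ v) + b • S (T₂ v)) := by
      simp [map_add, map_smul]
    rw [h8] at h6
    have h7 : v = -(a • S (T₁ v) + b • S (T₂ v)) := h6.symm
    rw [hC]
    simp only [ContinuousLinearMap.neg_apply, ContinuousLinearMap.add_apply,
      ContinuousLinearMap.smul_apply, ContinuousLinearMap.coe_comp', Function.comp_apply]
    exact h7.symm
  obtain ⟨Kc, hKc, hmem⟩ := hCc
  obtain ⟨r, hr, hball⟩ := Metric.mem_nhds_iff.mp hmem
  have hclosedK : IsClosed (K : Set H) := by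
    have : K = LinearMap.ker ((T + a • T₁ + b • T₂ : H →L[ℂ] H) : H →ₗ[ℂ] H) := rfl
    exact ContinuousLinearMap.isClosed_ker _
  have himg : (Subtype.val '' Metric.closedBall (0 : K) (r/2) : Set H)
      = Metric.closedBall (0:H) (r/2) ∩ (K : Set H) := by
    ext v
    constructor
    · rintro ⟨⟨w, hw⟩, hmem2, rfl⟩
      refine ⟨?_, hw⟩
      rw [Metric.mem_closedBall] at hmem2 ⊢
      simpa [dist_eq_norm] using hmem2
    · rintro ⟨h1, h2⟩
      refine ⟨⟨v, h2⟩, ?_, rfl⟩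
      rw [Metric.mem_closedBall] at h1 ⊢
      simpa [dist_eq_norm] using h1
  have hsub : Metric.closedBall (0:H) (r/2) ∩ (K : Set H) ⊆ Kc := by
    rintro v ⟨h1, h2⟩
    have hvb : v ∈ Metric.ball (0:H) r := by
      rw [Metric.mem_ball]
      rw [Metric.mem_closedBall] at h1
      calc dist v 0 ≤ r/2 := h1
        _ < r := by linarith
    have := hball hvb
    rwa [Set.mem_preimage, hfix v h2] at this
  have hcompact2 : IsCompact (Metric.closedBall (0:H) (r/2) ∩ (K : Set H)) :=
    hKc.of_isClosed_subset (Metric.isClosed_closedBall.inter hclosedK) hsub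
  have hcompact3 : IsCompact (Metric.closedBall (0 : K) (r/2)) := by
    rw [Topology.IsEmbedding.isCompact_iff (Topology.IsEmbedding.subtypeVal)]
    rw [himg]; exact hcompact2
  exact FiniteDimensional.of_isCompact_closedBall₀ ℂ (by positivity) hcompact3

lemma no_acc (T T₁ T₂ : H →L[ℂ] H) (hTc : OpCoercive T)
    (hT₁c : IsCompactOperator (⇑T₁ : H → H))
    (hT₂c : IsCompactOperator (⇑T₂ : H → H)) (hT₂sa : IsSelfAdjoint T₂)
    (hT₂pos : ∀ u : H, 0 ≤ (inner ℂ (T₂ u) u : ℂ).re) (x : ℝ) :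
    ¬ AccPt x (Filter.principal {k : ℝ | 0 < k ∧ ∃ u : H, u ≠ 0 ∧
        T u + ((k : ℂ) ^ 2) • T₁ u + ((k : ℂ) ^ 4) • T₂ u = 0}) := by
  classical
  intro hacc
  set Sset : Set ℝ := {k : ℝ | 0 < k ∧ ∃ u : H, u ≠ 0 ∧
      T u + ((k : ℂ) ^ 2) • T₁ u + ((k : ℂ) ^ 4) • T₂ u = 0} with hSset
  -- the inverse of T
  obtain ⟨S, hS1, hS2⟩ := exists_inverse T hTc
  -- positivity of T₂ and its square root
  have hpos : (0 : H →L[ℂ] H) ≤ T₂ := by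
    rw [ContinuousLinearMap.nonneg_iff_isPositive]
    refine ⟨hT₂sa.isSymmetric, fun u => ?_⟩
    have := hT₂pos u
    simpa [ContinuousLinearMap.reApplyInnerSelf, RCLike.re_to_complex] using this
  set Q : H →L[ℂ] H := CFC.sqrt T₂ with hQdef
  have hQc : IsCompactOperator (⇑Q : H → H) := sqrt_isCompact T₂ hpos hT₂c
  have hQQ : ∀ u : H, Q (Q u) = T₂ u := by
    intro u
    have : Q * Q = T₂ := CFC.sqrt_mul_sqrt_self T₂ hpos
    rw [← this]; rfl
  -- the block operator
  set c1 : (H × H) →L[ℂ] H :=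
    -((S.comp T₁).comp (ContinuousLinearMap.fst ℂ H H))
      - ((S.comp Q).comp (ContinuousLinearMap.snd ℂ H H)) with hc1def
  set c2 : (H × H) →L[ℂ] H := Q.comp (ContinuousLinearMap.fst ℂ H H) with hc2def
  have hc1app : ∀ p : H × H, c1 p = -(S (T₁ p.1)) - S (Q p.2) := by
    intro p; simp [hc1def]
  have hc2app : ∀ p : H × H, c2 p = Q p.1 := by intro p; simp [hc2def]
  set M₀ : (H × H) →L[ℂ] (H × H) := c1.prod c2 with hM₀def
  set eL : WithLp 2 (H × H) ≃L[ℂ] H × H :=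
    WithLp.prodContinuousLinearEquiv 2 ℂ H H with heLdef
  set M : WithLp 2 (H × H) →L[ℂ] WithLp 2 (H × H) :=
    ((eL.symm.toContinuousLinearMap.comp M₀).comp eL.toContinuousLinearMap) with hMdef
  have hMapp : ∀ z : WithLp 2 (H × H), M z = eL.symm (M₀ (eL z)) := by
    intro z; simp [hMdef]
  -- compactness of M
  have hMc : IsCompactOperator (⇑M : WithLp 2 (H × H) → WithLp 2 (H × H)) := by
    have hc1c : IsCompactOperator (⇑c1 : H × H → H) := by
      have h1 : IsCompactOperator (⇑((S.comp T₁).comp (ContinuousLinearMap.fst ℂ H H))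
          : H × H → H) := by
        have := (hT₁c.clm_comp S).comp_clm (ContinuousLinearMap.fst ℂ H H)
        convert this using 1
        all_goals rfl
      have h2 : IsCompactOperator (⇑((S.comp Q).comp (ContinuousLinearMap.snd ℂ H H))
          : H × H → H) := by
        have := (hQc.clm_comp S).comp_clm (ContinuousLinearMap.snd ℂ H H)
        convert this using 1
        all_goals rfl
      have heq : (⇑c1 : H × H → H) = -(⇑((S.comp T₁).comp (ContinuousLinearMap.fst ℂ H H)))
          - ⇑((S.comp Q).comp (ContinuousLinearMap.snd ℂ H H)) := by
        funext p; simp [hc1def]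
      rw [heq]
      exact (h1.neg).sub h2
    have hc2c : IsCompactOperator (⇑c2 : H × H → H) := by
      have := hQc.comp_clm (ContinuousLinearMap.fst ℂ H H)
      convert this using 1
      all_goals rfl
    have hM₀c : IsCompactOperator (⇑M₀ : H × H → H × H) := by
      have h1 := hc1c.clm_comp (ContinuousLinearMap.inl ℂ H H)
      have h2 := hc2c.clm_comp (ContinuousLinearMap.inr ℂ H H)
      have heq : (⇑M₀ : H × H → H × H)
          = (⇑(ContinuousLinearMap.inl ℂ H H) ∘ ⇑c1) + (⇑(ContinuousLinearMap.inr ℂ H H) ∘ ⇑c2) := by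
        funext p
        simp [hM₀def, ContinuousLinearMap.prod_apply, Prod.ext_iff]
      rw [heq]
      exact h1.add h2
    have heq : (⇑M : WithLp 2 (H × H) → WithLp 2 (H × H))
        = ⇑(eL.symm.toContinuousLinearMap) ∘ (⇑M₀ ∘ ⇑(eL.toContinuousLinearMap)) := by
      funext z; simp [hMdef]
    rw [heq]
    exact (hM₀c.comp_clm eL.toContinuousLinearMap).clm_comp eL.symm.toContinuousLinearMap
  -- sequence of distinct eigenvalues accumulating
  have hseq : ∀ ε : ℝ, 0 < ε → ∃ k : ℝ, (k ∈ Sset ∧ k ≠ x) ∧ |k - x| < ε := by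
    intro ε hε
    obtain ⟨y, hy, hyx⟩ := accPt_iff_nhds.mp hacc (Metric.ball x ε)
      (Metric.ball_mem_nhds x hε)
    exact ⟨y, ⟨hy.2, hyx⟩, by simpa [Real.dist_eq] using hy.1⟩
  choose! f hf1 hf2 using hseq
  set g : ℕ → ℝ := fun n => Nat.rec (f 1) (fun _ prev => f |prev - x|) n with hgdef
  have hg0 : g 0 = f 1 := rfl
  have hgsucc : ∀ n, g (n + 1) = f |g n - x| := fun n => rfl
  have hall : ∀ n, g n ∈ Sset ∧ g n ≠ x := by
    intro n
    induction n with
    | zero => rw [hg0]; exact hf1 1 one_pos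
    | succ n ih =>
      rw [hgsucc]
      exact hf1 _ (abs_pos.mpr (sub_ne_zero.mpr ih.2))
  have hdec : ∀ n, |g (n + 1) - x| < |g n - x| := by
    intro n
    rw [hgsucc]
    exact hf2 _ (abs_pos.mpr (sub_ne_zero.mpr (hall n).2))
  have hstrict : StrictAnti (fun n => |g n - x|) := strictAnti_nat_of_succ_lt hdec
  have hinj : Function.Injective g := by
    intro a b hab
    by_contra hne
    rcases lt_or_gt_of_ne hne with h | h
    · exact absurd (congrArg (fun t => |t - x|) hab) (ne_of_gt (hstrict h))
    · exact absurd (congrArg (fun t => |t - x|) hab) (ne_of_lt (hstrict h))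
  have hb1 : ∀ n, |g n - x| < 1 := by
    intro n
    have h0 : |g 0 - x| < 1 := by rw [hg0]; exact hf2 1 one_pos
    calc |g n - x| ≤ |g 0 - x| := hstrict.antitone (Nat.zero_le n)
      _ < 1 := h0
  set B : ℝ := max (x + 1) 1 with hBdef
  have hB : 0 < B := lt_of_lt_of_le one_pos (le_max_right _ _)
  have hgB : ∀ n, g n ≤ B := by
    intro n
    have := hb1 n
    have h2 : g n - x < 1 := lt_of_le_of_lt (le_abs_self _) this
    have : g n < x + 1 := by linarith
    exact le_trans this.le (le_max_left _ _)
  have hgpos : ∀ n, 0 < g n := fun n => (hall n).1.1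
  -- eigenvectors
  have hu : ∀ n, ∃ u : H, u ≠ 0 ∧
      T u + ((g n : ℂ) ^ 2) • T₁ u + ((g n : ℂ) ^ 4) • T₂ u = 0 := fun n => (hall n).1.2
  choose u hu0 hueq using hu
  set μ : ℕ → ℂ := fun n => (((g n : ℂ)) ^ 2)⁻¹ with hμdef
  have hκ0 : ∀ n, ((g n : ℂ)) ^ 2 ≠ 0 := by
    intro n
    exact pow_ne_zero 2 (by exact_mod_cast (hgpos n).ne')
  have hμinj : Function.Injective μ := by
    intro a b hab
    apply hinj
    have h2 : ((g a : ℂ)) ^ 2 = ((g b : ℂ)) ^ 2 := by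
      have := inv_injective hab
      exact this
    have h3 : (g a : ℝ) ^ 2 = (g b : ℝ) ^ 2 := by exact_mod_cast h2
    nlinarith [hgpos a, hgpos b]
  set w : ℕ → WithLp 2 (H × H) :=
    fun n => eL.symm (u n, ((g n : ℂ) ^ 2) • Q (u n)) with hwdef
  have hw0 : ∀ n, w n ≠ 0 := by
    intro n h
    rw [hwdef] at h
    have h2 := (ContinuousLinearEquiv.map_eq_zero_iff eL.symm).mp h
    exact hu0 n (congrArg Prod.fst h2)
  have hMw : ∀ n, M (w n) = μ n • w n := by
    intro n
    set κ : ℂ := ((g n : ℂ)) ^ 2 with hκdef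
    have hκne := hκ0 n
    have heq := hueq n
    have h4 : ((g n : ℂ)) ^ 4 = κ * κ := by rw [hκdef]; ring
    have h5 : κ • T₁ (u n) + ((g n : ℂ) ^ 4) • T₂ (u n) = -(T (u n)) := by
      have h9 := heq
      rw [add_assoc] at h9
      exact eq_neg_of_add_eq_zero_right h9
    have h1 : κ • (T₁ (u n) + κ • T₂ (u n)) = -(T (u n)) := by
      rw [smul_add, smul_smul, ← h4]
      exact h5
    have h2 : T₁ (u n) + κ • T₂ (u n) = -(κ⁻¹ • T (u n)) := by
      have := congrArg (fun z => κ⁻¹ • z) h1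
      simp only [smul_smul, inv_mul_cancel₀ (show κ ≠ 0 from hκne), one_smul] at this
      rw [this, smul_neg]
    -- apply S
    have h3 : S (T₁ (u n)) + κ • S (T₂ (u n)) = -(κ⁻¹ • u n) := by
      have := congrArg S h2
      rw [map_add, map_smul, map_neg, map_smul, hS1] at this
      exact this
    -- compute M (w n)
    have hM₀app : M₀ ((u n, κ • Q (u n)) : H × H)
        = (-(S (T₁ (u n))) - S (Q (κ • Q (u n))), Q (u n)) := by
      rw [hM₀def, ContinuousLinearMap.prod_apply, hc1app, hc2app]
    have hfirst : -(S (T₁ (u n))) - S (Q (κ • Q (u n))) = κ⁻¹ • u n := by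
      rw [map_smul, map_smul, hQQ]
      have h7 : S (T₁ (u n)) = -(κ⁻¹ • u n) - κ • S (T₂ (u n)) := by
        rw [← h3]; abel
      rw [h7]; abel
    have hsecond : Q (u n) = κ⁻¹ • (κ • Q (u n)) := by
      rw [inv_smul_smul₀ hκne]
    rw [hMapp]
    have e1 : eL (w n) = ((u n, κ • Q (u n)) : H × H) := by
      rw [hwdef]; exact eL.apply_symm_apply _
    rw [e1, hM₀app, hfirst]
    have e2 : ((κ⁻¹ • u n, Q (u n)) : H × H) = κ⁻¹ • ((u n, κ • Q (u n)) : H × H) := by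
      rw [Prod.smul_mk]
      exact congrArg (Prod.mk (κ⁻¹ • u n)) hsecond
    rw [e2, map_smul]
  -- lower bound on eigenvalues
  have hμδ : ∀ n, (B ^ 2)⁻¹ ≤ ‖μ n‖ := by
    intro n
    have h1 : ‖μ n‖ = ((g n) ^ 2)⁻¹ := by
      rw [hμdef]
      rw [norm_inv, ← Complex.ofReal_pow, Complex.norm_real, Real.norm_eq_abs,
        abs_of_pos (pow_pos (hgpos n) 2)]
    rw [h1]
    apply inv_anti₀
    · exact pow_pos (hgpos n) 2
    · have h2 := hgB n
      have h3 := hgpos n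
      nlinarith
  exact compact_no_eigenseq M hMc μ hμinj (B ^ 2)⁻¹ (inv_pos.mpr (pow_pos hB 2)) hμδ w hw0 hMw

end Aux

theorem stmt0 {H : Type*} [NormedAddCommGroup H] [InnerProductSpace ℂ H] [CompleteSpace H]
    (T T₁ T₂ : H →L[ℂ] H) (σ : ℝ)
    (hT : IsSelfAdjoint T)
    (hσ : (σ = 1 ∧ OpCoercive T) ∨ (σ = -1 ∧ OpCoercive (-T)))
    (hT₁c : IsCompactOperator T₁) (hT₁sa : IsSelfAdjoint T₁)
    (hT₂c : IsCompactOperator T₂) (hT₂sa : IsSelfAdjoint T₂)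
    (hT₂pos : ∀ u : H, 0 ≤ σ * (inner ℂ (T₂ u) u : ℂ).re) :
    (∀ x : ℝ, ¬ AccPt x (Filter.principal
        {k : ℝ | 0 < k ∧ ∃ u : H, u ≠ 0 ∧
          T u + ((k : ℂ) ^ 2) • T₁ u + ((k : ℂ) ^ 4) • T₂ u = 0})) ∧
    (∀ k : ℝ, (0 < k ∧ ∃ u : H, u ≠ 0 ∧
          T u + ((k : ℂ) ^ 2) • T₁ u + ((k : ℂ) ^ 4) • T₂ u = 0) →
      FiniteDimensional ℂ
        (LinearMap.ker ((T + ((k : ℂ) ^ 2) • T₁ + ((k : ℂ) ^ 4) • T₂ : H →L[ℂ] H) : H →ₗ[ℂ] H))) := by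
  rcases hσ with ⟨hσ1, hco⟩ | ⟨hσ1, hco⟩
  · constructor
    · intro x
      apply no_acc T T₁ T₂ hco hT₁c hT₂c hT₂sa
      intro u
      have := hT₂pos u
      rw [hσ1, one_mul] at this
      exact this
    · intro k _
      exact ker_findim T T₁ T₂ hco hT₁c hT₂c _ _
  · -- replace all operators by their negatives
    have hT₁c' : IsCompactOperator (⇑(-T₁) : H → H) := by
      have heq : (⇑(-T₁) : H → H) = -(⇑T₁) := by funext v; simp
      rw [heq]; exact hT₁c.neg
    have hT₂c' : IsCompactOperator (⇑(-T₂) : H → H) := by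
      have heq : (⇑(-T₂) : H → H) = -(⇑T₂) := by funext v; simp
      rw [heq]; exact hT₂c.neg
    have hT₂sa' : IsSelfAdjoint (-T₂) := hT₂sa.neg
    have h2pos : ∀ u : H, 0 ≤ (inner ℂ ((-T₂) u) u : ℂ).re := by
      intro u
      have := hT₂pos u
      rw [hσ1] at this
      have h3 : (inner ℂ ((-T₂) u) u : ℂ) = -(inner ℂ (T₂ u) u : ℂ) := by
        rw [ContinuousLinearMap.neg_apply, inner_neg_left]
      rw [h3, Complex.neg_re]
      linarith
    have hseteq : {k : ℝ | 0 < k ∧ ∃ u : H, u ≠ 0 ∧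
          T u + ((k : ℂ) ^ 2) • T₁ u + ((k : ℂ) ^ 4) • T₂ u = 0}
        = {k : ℝ | 0 < k ∧ ∃ u : H, u ≠ 0 ∧
          (-T) u + ((k : ℂ) ^ 2) • (-T₁) u + ((k : ℂ) ^ 4) • (-T₂) u = 0} := by
      ext k
      simp only [Set.mem_setOf_eq]
      constructor
      · rintro ⟨hk, v, hv0, hveq⟩
        refine ⟨hk, v, hv0, ?_⟩
        have h5 : (-T) v + ((k : ℂ) ^ 2) • (-T₁) v + ((k : ℂ) ^ 4) • (-T₂) v
            = -(T v + ((k : ℂ) ^ 2) • T₁ v + ((k : ℂ) ^ 4) • T₂ v) := by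
          simp only [ContinuousLinearMap.neg_apply, smul_neg]; abel
        rw [h5, hveq, neg_zero]
      · rintro ⟨hk, v, hv0, hveq⟩
        refine ⟨hk, v, hv0, ?_⟩
        have h5 : (-T) v + ((k : ℂ) ^ 2) • (-T₁) v + ((k : ℂ) ^ 4) • (-T₂) v
            = -(T v + ((k : ℂ) ^ 2) • T₁ v + ((k : ℂ) ^ 4) • T₂ v) := by
          simp only [ContinuousLinearMap.neg_apply, smul_neg]; abel
        rw [h5, neg_eq_zero] at hveq
        exact hveq
    constructor
    · intro x
      rw [hseteq]
      exact no_acc (-T) (-T₁) (-T₂) hco hT₁c' hT₂c' hT₂sa' h2pos x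
    · intro k _
      have hfd := ker_findim (-T) (-T₁) (-T₂) hco hT₁c' hT₂c' ((k : ℂ) ^ 2) ((k : ℂ) ^ 4)
      have hker_eq : LinearMap.ker ((T + ((k : ℂ) ^ 2) • T₁ + ((k : ℂ) ^ 4) • T₂ : H →L[ℂ] H) : H →ₗ[ℂ] H)
          = LinearMap.ker (((-T) + ((k : ℂ) ^ 2) • (-T₁) + ((k : ℂ) ^ 4) • (-T₂) : H →L[ℂ] H) : H →ₗ[ℂ] H) := by
        ext v
        simp only [LinearMap.mem_ker, ContinuousLinearMap.coe_coe,
          ContinuousLinearMap.add_apply, ContinuousLinearMap.smul_apply,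
          ContinuousLinearMap.neg_apply]
        have h5 : -(T v) + ((k : ℂ) ^ 2) • (-(T₁ v)) + ((k : ℂ) ^ 4) • (-(T₂ v))
            = -(T v + ((k : ℂ) ^ 2) • T₁ v + ((k : ℂ) ^ 4) • T₂ v) := by
          simp only [smul_neg]; abel
        rw [h5, neg_eq_zero]
      rw [hker_eq]
      exact hfd
end

section
/- Let H be a complex Hilbert space, let T be a bounded self-adjoint operator on H such that either T or -T is coercive (with σ = 1 if T is coercive and σ = -1 if -T is coercive), let T₁ be a compact self-adjoint operator on H, and let T₂ be a compact self-adjoint operator on H with σ·Re⟨T₂u, u⟩ ≥ 0 for all u ∈ H. Then there exists δ > 0 such that every k > 0 for which the equation T u + k² T₁ u + k⁴ T₂ u = 0 admits a nonzero solution u ∈ H satisfies k ≥ δ. In other words, the positive values k at which the quadratic pencil has nontrivial kernel are uniformly bounded away from 0. -/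
open scoped InnerProductSpace

theorem stmt1 {H : Type*} [NormedAddCommGroup H] [InnerProductSpace ℂ H] [CompleteSpace H]
    (T T₁ T₂ : H →L[ℂ] H) (σ : ℝ)
    (hT : IsSelfAdjoint T)
    (hσ : (σ = 1 ∧ OpCoercive T) ∨ (σ = -1 ∧ OpCoercive (-T)))
    (hT₁c : IsCompactOperator T₁) (hT₁sa : IsSelfAdjoint T₁)
    (hT₂c : IsCompactOperator T₂) (hT₂sa : IsSelfAdjoint T₂)
    (hT₂pos : ∀ u : H, 0 ≤ σ * (inner ℂ (T₂ u) u : ℂ).re) :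
    ∃ δ : ℝ, 0 < δ ∧ ∀ k : ℝ, 0 < k →
      (∃ u : H, u ≠ 0 ∧ T u + ((k : ℂ) ^ 2) • T₁ u + ((k : ℂ) ^ 4) • T₂ u = 0) →
      δ ≤ k := by
  have hσ1 : σ = 1 ∨ σ = -1 := by rcases hσ with ⟨h, _⟩ | ⟨h, _⟩ <;> [left; right] <;> exact h
  obtain ⟨c, hc, hcoer⟩ : ∃ c : ℝ, 0 < c ∧
      ∀ u : H, c * ‖u‖ ^ 2 ≤ σ * (inner ℂ (T u) u : ℂ).re := by
    rcases hσ with ⟨hs, c, hc, h⟩ | ⟨hs, c, hc, h⟩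
    · exact ⟨c, hc, fun u => by simpa [hs] using h u⟩
    · refine ⟨c, hc, fun u => ?_⟩
      have := h u
      simp only [ContinuousLinearMap.neg_apply, inner_neg_left, Complex.neg_re] at this
      simpa [hs] using this
  have hden : (0:ℝ) < ‖T₁‖ + 1 := by positivity
  refine ⟨Real.sqrt (c / (‖T₁‖ + 1)), Real.sqrt_pos.mpr (div_pos hc hden), ?_⟩
  rintro k hk ⟨u, hu, heq⟩
  have hnorm : 0 < ‖u‖ := norm_pos_iff.mpr hu
  have hinner : (inner ℂ (T u) u : ℂ) + (k:ℂ)^2 * inner ℂ (T₁ u) u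
      + (k:ℂ)^4 * inner ℂ (T₂ u) u = 0 := by
    have := congrArg (fun v => (inner ℂ v u : ℂ)) heq
    simpa [inner_add_left, inner_smul_left, map_pow, Complex.conj_ofReal, mul_comm] using this
  have hre : (inner ℂ (T u) u : ℂ).re + k^2 * (inner ℂ (T₁ u) u : ℂ).re
      + k^4 * (inner ℂ (T₂ u) u : ℂ).re = 0 := by
    have := congrArg Complex.re hinner
    simpa [Complex.add_re, Complex.mul_re, ← Complex.ofReal_pow, Complex.ofReal_re,
      Complex.ofReal_im] using this
  -- multiply by σ
  have hσre : σ * (inner ℂ (T u) u : ℂ).re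
      = -(k^2 * (σ * (inner ℂ (T₁ u) u : ℂ).re)) - k^4 * (σ * (inner ℂ (T₂ u) u : ℂ).re) := by
    rcases hσ1 with h | h <;> subst h <;> linarith [hre]
  have hbound1 : |(inner ℂ (T₁ u) u : ℂ).re| ≤ ‖T₁‖ * ‖u‖ ^ 2 := by
    calc |(inner ℂ (T₁ u) u : ℂ).re| ≤ ‖(inner ℂ (T₁ u) u : ℂ)‖ := Complex.abs_re_le_norm _
      _ ≤ ‖T₁ u‖ * ‖u‖ := norm_inner_le_norm _ _
      _ ≤ (‖T₁‖ * ‖u‖) * ‖u‖ := by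
          gcongr; exact T₁.le_opNorm u
      _ = ‖T₁‖ * ‖u‖ ^ 2 := by ring
  have hσabs : -(σ * (inner ℂ (T₁ u) u : ℂ).re) ≤ |(inner ℂ (T₁ u) u : ℂ).re| := by
    rcases hσ1 with h | h <;> subst h
    · simpa using neg_le_abs ((inner ℂ (T₁ u) u : ℂ).re)
    · simpa using le_abs_self ((inner ℂ (T₁ u) u : ℂ).re)
  have key : c * ‖u‖ ^ 2 ≤ k^2 * (‖T₁‖ * ‖u‖ ^ 2) := by
    have h2 := hT₂pos u
    have h1 := hcoer u
    nlinarith [sq_nonneg k, sq_nonneg (k^2)]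
  have hk2 : c / (‖T₁‖ + 1) ≤ k ^ 2 := by
    rw [div_le_iff₀ hden]
    have hcle : c ≤ k ^ 2 * ‖T₁‖ := by
      have h2 : (0:ℝ) < ‖u‖ ^ 2 := by positivity
      have := le_of_mul_le_mul_right (by linarith [key] : c * ‖u‖ ^ 2 ≤ (k ^ 2 * ‖T₁‖) * ‖u‖ ^ 2) h2
      exact this
    nlinarith [sq_nonneg k]
  calc Real.sqrt (c / (‖T₁‖ + 1)) ≤ Real.sqrt (k^2) := Real.sqrt_le_sqrt hk2
    _ = k := by rw [Real.sqrt_sq hk.le]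
end

section
/- Let H be an infinite-dimensional separable complex Hilbert space, let 0 < k₀ < k₁, and let k ↦ A_k be a map from [k₀, k₁] to the bounded self-adjoint operators on H that is continuous in the operator norm and such that each A_k is coercive. Let B be a compact self-adjoint operator on H with Re⟨B u, u⟩ > 0 for all u ≠ 0. Assume: (i) Re⟨(A_{k₀} - k₀² B) u, u⟩ > 0 for all u ≠ 0; (ii) there exists an m-dimensional subspace W of H such that Re⟨(A_{k₁} - k₁² B) u, u⟩ ≤ 0 for all u ∈ W. Then for each j ∈ {1, …, m} there exists k ∈ [k₀, k₁] such that λ_j(A_k, B) = k²; in particular there exist k ∈ [k₀, k₁] and u ∈ H, u ≠ 0, with A_k u = k² B u. -/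
open scoped InnerProductSpace

/-- The `j`-th generalized min-max value `λ_j(A, B)`:
the infimum over all `j`-dimensional subspaces `V` of `H` of the supremum over
nonzero `u ∈ V` of `Re⟪A u, u⟫ / Re⟪B u, u⟫`. -/
noncomputable def minmaxVal {H : Type*} [NormedAddCommGroup H] [InnerProductSpace ℂ H]
    (A B : H →L[ℂ] H) (j : ℕ) : ℝ :=
  ⨅ V : {V : Submodule ℂ H // Module.finrank ℂ V = j},
    ⨆ u : {u : H // u ∈ (V : Submodule ℂ H) ∧ u ≠ 0},
      (inner ℂ (A u) u : ℂ).re / (inner ℂ (B u) u : ℂ).re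


open Module

namespace TEaux

variable {H : Type*} [NormedAddCommGroup H] [InnerProductSpace ℂ H]

/-- quadratic nonneg ⇒ discriminant -/
lemma quad_disc {a b c : ℝ} (hc : 0 ≤ c) (h : ∀ t : ℝ, 0 ≤ a + 2*t*b + t^2*c) :
    b^2 ≤ a*c := by
  rcases eq_or_lt_of_le hc with hc0 | hc0
  · have hb : b = 0 := by
      by_contra hb
      have h1 := h (-(a+1)/(2*b))
      rw [← hc0] at h1
      have : a + 2 * (-(a+1)/(2*b)) * b + (-(a+1)/(2*b))^2*0 = -1 := by
        field_simp
        ring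
      rw [this] at h1; linarith
    have h0 := h 0
    simp only [mul_zero, zero_mul, add_zero, zero_add, pow_two] at h0
    nlinarith
  · have h1 := h (-b/c)
    have heq : a + 2 * (-b/c) * b + (-b/c)^2*c = a - b^2/c := by
      field_simp
      ring
    rw [heq] at h1
    have h2 : 0 ≤ (a - b^2/c) * c := mul_nonneg h1 hc
    have h3 : (a - b^2/c) * c = a*c - b^2 := by field_simp
    linarith [h3 ▸ h2]

lemma inner_self_re (x : H) : (inner ℂ x x : ℂ).re = ‖x‖^2 := by
  rw [inner_self_eq_norm_sq_to_K (𝕜 := ℂ)]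
  simp [← Complex.ofReal_pow]

lemma re_inner_le_opNorm (T : H →L[ℂ] H) (u : H) :
    (inner ℂ (T u) u : ℂ).re ≤ ‖T‖ * ‖u‖^2 := by
  calc (inner ℂ (T u) u : ℂ).re ≤ ‖(inner ℂ (T u) u : ℂ)‖ := Complex.re_le_norm _
  _ ≤ ‖T u‖ * ‖u‖ := norm_inner_le_norm _ _
  _ ≤ (‖T‖ * ‖u‖) * ‖u‖ := by gcongr; exact T.le_opNorm u
  _ = ‖T‖ * ‖u‖^2 := by ring

lemma abs_re_inner_le_opNorm (T : H →L[ℂ] H) (u : H) :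
    |(inner ℂ (T u) u : ℂ).re| ≤ ‖T‖ * ‖u‖^2 := by
  rw [abs_le]
  constructor
  · have := re_inner_le_opNorm (-T) u
    simp only [ContinuousLinearMap.neg_apply, inner_neg_left, Complex.neg_re, norm_neg] at this
    linarith
  · exact re_inner_le_opNorm T u

variable [CompleteSpace H]

/-- expansion of the quadratic form of a self-adjoint operator -/
lemma quad_expand {S : H →L[ℂ] H} (hS : IsSelfAdjoint S) (u v : H) (t : ℝ) :
    (inner ℂ (S (u + (t:ℂ) • v)) (u + (t:ℂ) • v) : ℂ).re
      = (inner ℂ (S u) u : ℂ).re + 2*t*(inner ℂ (S u) v : ℂ).re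
        + t^2 * (inner ℂ (S v) v : ℂ).re := by
  have hsym := hS.isSymmetric
  have h1 : (inner ℂ (S v) u : ℂ) = starRingEnd ℂ (inner ℂ (S u) v : ℂ) := by
    rw [inner_conj_symm]
    exact hsym v u
  have hC : (inner ℂ (S (u + (t:ℂ) • v)) (u + (t:ℂ) • v) : ℂ)
      = inner ℂ (S u) u + (t:ℂ) * (inner ℂ (S u) v + starRingEnd ℂ (inner ℂ (S u) v))
        + (t:ℂ)^2 * inner ℂ (S v) v := by
    simp only [map_add, map_smul, inner_add_left, inner_add_right, inner_smul_left,
      inner_smul_right, Complex.conj_ofReal, h1]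
    ring
  rw [hC]
  simp only [Complex.add_re, pow_two, ← Complex.ofReal_mul, Complex.re_ofReal_mul,
    Complex.conj_re]
  ring

/-- a self-adjoint operator with nonnegative quadratic form vanishing at u kills u -/
lemma kernel_of_quad_zero {S : H →L[ℂ] H} (hS : IsSelfAdjoint S)
    (hQ : ∀ w : H, 0 ≤ (inner ℂ (S w) w : ℂ).re) {u : H}
    (hu : (inner ℂ (S u) u : ℂ).re = 0) : S u = 0 := by
  have key : ∀ v : H, (inner ℂ (S u) v : ℂ).re = 0 := by
    intro v
    have h : ∀ t : ℝ, 0 ≤ (inner ℂ (S u) u : ℂ).re + 2*t*(inner ℂ (S u) v : ℂ).re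
        + t^2 * (inner ℂ (S v) v : ℂ).re := by
      intro t
      rw [← quad_expand hS u v t]
      exact hQ _
    have hd := quad_disc (hQ v) h
    rw [hu, zero_mul] at hd
    have hb2 : ((inner ℂ (S u) v : ℂ).re)^2 = 0 := le_antisymm hd (sq_nonneg _)
    exact pow_eq_zero_iff two_ne_zero |>.mp hb2
  have h2 := key (S u)
  rw [inner_self_re] at h2
  have : ‖S u‖ = 0 := by nlinarith [norm_nonneg (S u)]
  exact norm_eq_zero.mp this

/-- positivity + bounded below ⇒ coercive -/
lemma coercive_of_boundedBelow {S : H →L[ℂ] H} (hS : IsSelfAdjoint S)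
    (hQ : ∀ w : H, 0 ≤ (inner ℂ (S w) w : ℂ).re) {c : ℝ} (hc : 0 < c)
    (hlow : ∀ u : H, c * ‖u‖ ≤ ‖S u‖) :
    ∀ u : H, (c^2/‖S‖) * ‖u‖^2 ≤ (inner ℂ (S u) u : ℂ).re := by
  intro u
  rcases eq_or_ne u 0 with rfl | hu
  · simp
  have hSu : S u ≠ 0 := by
    intro h
    have h1 := hlow u
    rw [h, norm_zero] at h1
    have : ‖u‖ ≤ 0 := by nlinarith [norm_pos_iff.mpr hu]
    exact hu (norm_le_zero_iff.mp this)
  have hSu2 : 0 < ‖S u‖^2 := pow_pos (norm_pos_iff.mpr hSu) 2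
  have hSnorm : 0 < ‖S‖ := by
    by_contra h
    push_neg at h
    have hS0 : S = 0 := by
      ext x
      have := le_antisymm (le_trans (S.le_opNorm x)
        (by nlinarith [norm_nonneg x])) (norm_nonneg _)
      simpa using this
    exact hSu (by simp [hS0])
  have h : ∀ t : ℝ, 0 ≤ (inner ℂ (S u) u : ℂ).re + 2*t*(‖S u‖^2)
      + t^2 * (inner ℂ (S (S u)) (S u) : ℂ).re := by
    intro t
    have h0 := hQ (u + (t:ℂ) • (S u))
    rw [quad_expand hS u (S u) t, inner_self_re] at h0
    exact h0
  have hdisc := quad_disc (hQ (S u)) h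
  have hQSu : (inner ℂ (S (S u)) (S u) : ℂ).re ≤ ‖S‖ * ‖S u‖^2 := re_inner_le_opNorm S (S u)
  have hlowu := hlow u
  have hq := hQ u
  have h1 : (‖S u‖^2)^2 ≤ (inner ℂ (S u) u : ℂ).re * (‖S‖ * ‖S u‖^2) :=
    hdisc.trans (mul_le_mul_of_nonneg_left hQSu hq)
  have h2 : c^2 * ‖u‖^2 ≤ ‖S u‖^2 := by
    have := mul_le_mul hlowu hlowu (by positivity) (norm_nonneg _)
    nlinarith
  rw [div_mul_eq_mul_div, div_le_iff₀ hSnorm]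
  nlinarith [mul_le_mul_of_nonneg_right h2 (le_of_lt hSu2), h1, hSu2]

end TEaux

namespace TEaux2
open TEaux Metric
variable {H : Type*} [NormedAddCommGroup H] [InnerProductSpace ℂ H] [CompleteSpace H]

omit [CompleteSpace H] in
lemma lower_of_coercive {J : H →L[ℂ] H} {cJ : ℝ}
    (hJ : ∀ u : H, cJ * ‖u‖^2 ≤ (inner ℂ (J u) u : ℂ).re) (u : H) :
    cJ * ‖u‖ ≤ ‖J u‖ := by
  rcases eq_or_ne u 0 with rfl | hu
  · simp
  have h1 : cJ * ‖u‖^2 ≤ ‖J u‖ * ‖u‖ := by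
    calc cJ * ‖u‖^2 ≤ (inner ℂ (J u) u : ℂ).re := hJ u
    _ ≤ ‖(inner ℂ (J u) u : ℂ)‖ := Complex.re_le_norm _
    _ ≤ ‖J u‖ * ‖u‖ := norm_inner_le_norm _ _
  have hup : 0 < ‖u‖ := norm_pos_iff.mpr hu
  have := (mul_le_mul_iff_of_pos_right hup).mp (by nlinarith : (cJ * ‖u‖) * ‖u‖ ≤ ‖J u‖ * ‖u‖)
  exact this

/-- injectivity of a coercive-plus-compact operator implies a lower bound. -/
lemma boundedBelow_of_injective (J C : H →L[ℂ] H) {cJ : ℝ} (hcJ : 0 < cJ)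
    (hJ : ∀ u : H, cJ * ‖u‖^2 ≤ (inner ℂ (J u) u : ℂ).re)
    (hC : IsCompactOperator (⇑C))
    (hinj : ∀ u : H, (J - C) u = 0 → u = 0) :
    ∃ c : ℝ, 0 < c ∧ ∀ u : H, c * ‖u‖ ≤ ‖(J - C) u‖ := by
  by_contra hcon
  push_neg at hcon
  have hseq : ∀ n : ℕ, ∃ v : H, ‖v‖ = 1 ∧ ‖(J - C) v‖ < 1/(n+1) := by
    intro n
    obtain ⟨u, hu⟩ := hcon (1/(n+1)) (by positivity)
    have hu0 : u ≠ 0 := by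
      rintro rfl
      simp at hu
    have hun : 0 < ‖u‖ := norm_pos_iff.mpr hu0
    refine ⟨((‖u‖⁻¹ : ℝ) : ℂ) • u, ?_, ?_⟩
    · rw [norm_smul]
      simp [abs_of_pos (inv_pos.mpr hun), inv_mul_cancel₀ hun.ne']
    · rw [map_smul, norm_smul]
      simp only [Complex.norm_real, Real.norm_eq_abs, abs_of_pos (inv_pos.mpr hun)]
      calc ‖u‖⁻¹ * ‖(J - C) u‖ < ‖u‖⁻¹ * (1/(n+1) * ‖u‖) := by
            apply mul_lt_mul_of_pos_left _ (inv_pos.mpr hun)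
            simpa [mul_comm] using hu
      _ = 1/(n+1) := by field_simp
  choose v hv1 hv2 using hseq
  obtain ⟨K, hK, hKsub⟩ := hC.image_closedBall_subset_compact (𝕜₁ := ℂ) 1
  have hmem : ∀ n, C (v n) ∈ K := by
    intro n
    apply hKsub
    exact ⟨v n, by simp [closedBall, hv1 n], rfl⟩
  obtain ⟨w, -, φ, hφ, hwlim⟩ := hK.tendsto_subseq hmem
  have hSlim : Filter.Tendsto (fun n => (J - C) (v n)) Filter.atTop (nhds 0) := by
    apply squeeze_zero_norm (fun n => (hv2 n).le)
    exact tendsto_one_div_add_atTop_nhds_zero_nat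
  have hSlim' : Filter.Tendsto (fun n => (J - C) (v (φ n))) Filter.atTop (nhds 0) :=
    hSlim.comp hφ.tendsto_atTop
  have hJlim : Filter.Tendsto (fun n => J (v (φ n))) Filter.atTop (nhds w) := by
    have : (fun n => J (v (φ n))) = fun n => (J - C) (v (φ n)) + C (v (φ n)) := by
      funext n; simp
    rw [this]
    simpa using hSlim'.add hwlim
  have hJlow := lower_of_coercive hJ
  have hvC : CauchySeq (fun n => v (φ n)) := by
    rw [Metric.cauchySeq_iff]
    intro ε hε
    have hJC := hJlim.cauchySeq
    rw [Metric.cauchySeq_iff] at hJC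
    obtain ⟨N, hN⟩ := hJC (cJ * ε) (by positivity)
    refine ⟨N, fun i hi j hj => ?_⟩
    have h1 : cJ * dist (v (φ i)) (v (φ j)) ≤ dist (J (v (φ i))) (J (v (φ j))) := by
      rw [dist_eq_norm, dist_eq_norm, ← map_sub]
      exact hJlow _
    have h2 := hN i hi j hj
    calc dist (v (φ i)) (v (φ j)) ≤ cJ⁻¹ * dist (J (v (φ i))) (J (v (φ j))) := by
          rw [le_inv_mul_iff₀ hcJ]; exact h1
    _ < cJ⁻¹ * (cJ * ε) := by apply mul_lt_mul_of_pos_left h2 (inv_pos.mpr hcJ)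
    _ = ε := by field_simp
  obtain ⟨u, hu⟩ := cauchySeq_tendsto_of_complete hvC
  have hnu : ‖u‖ = 1 := by
    have h1 : Filter.Tendsto (fun n => ‖v (φ n)‖) Filter.atTop (nhds ‖u‖) :=
      (continuous_norm.tendsto u).comp hu
    have h2 : (fun n => ‖v (φ n)‖) = fun _ => (1:ℝ) := by funext n; exact hv1 _
    rw [h2] at h1
    exact (tendsto_const_nhds_iff.mp h1).symm
  have hSu : (J - C) u = 0 := by
    have h1 : Filter.Tendsto (fun n => (J - C) (v (φ n))) Filter.atTop (nhds ((J - C) u)) :=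
      ((J - C).continuous.tendsto u).comp hu
    exact tendsto_nhds_unique h1 hSlim'
  have := hinj u hSu
  rw [this, norm_zero] at hnu
  exact one_ne_zero hnu.symm

end TEaux2

namespace TEaux3
open TEaux Module

variable {H : Type*} [NormedAddCommGroup H] [InnerProductSpace ℂ H]

noncomputable def ratio (T B : H →L[ℂ] H) (u : H) : ℝ :=
  (inner ℂ (T u) u : ℂ).re / (inner ℂ (B u) u : ℂ).re

noncomputable def supV (T B : H →L[ℂ] H) (V : Submodule ℂ H) : ℝ :=
  ⨆ u : {u : H // u ∈ V ∧ u ≠ 0}, ratio T B u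

lemma minmax_eq (T B : H →L[ℂ] H) (j : ℕ) :
    minmaxVal T B j = ⨅ V : {V : Submodule ℂ H // Module.finrank ℂ V = j}, supV T B V := rfl

lemma re_inner_real_smul (T : H →L[ℂ] H) (u : H) (a : ℝ) :
    (inner ℂ (T ((a:ℂ) • u)) ((a:ℂ) • u) : ℂ).re = a^2 * (inner ℂ (T u) u : ℂ).re := by
  rw [map_smul, inner_smul_left, inner_smul_right, Complex.conj_ofReal, ← mul_assoc,
    ← Complex.ofReal_mul, Complex.re_ofReal_mul]
  ring

/-- On a finite-dimensional subspace, the form of B is uniformly positive. -/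
lemma eps_B (B : H →L[ℂ] H) (hBpos : ∀ u : H, u ≠ 0 → 0 < (inner ℂ (B u) u : ℂ).re)
    (V : Submodule ℂ H) [FiniteDimensional ℂ V] :
    ∃ ε : ℝ, 0 < ε ∧ ∀ u ∈ V, ε * ‖u‖^2 ≤ (inner ℂ (B u) u : ℂ).re := by
  by_cases hV : ∀ u ∈ V, u = (0:H)
  · exact ⟨1, one_pos, fun u hu => by rw [hV u hu]; simp⟩
  push_neg at hV
  obtain ⟨u₀, hu₀V, hu₀⟩ := hV
  haveI : ProperSpace V := FiniteDimensional.proper ℂ V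
  have hn0 : 0 < ‖u₀‖ := norm_pos_iff.mpr hu₀
  have hsne : (Metric.sphere (0:V) 1).Nonempty := by
    refine ⟨⟨((‖u₀‖⁻¹ : ℝ):ℂ) • u₀, V.smul_mem _ hu₀V⟩, ?_⟩
    simp only [Metric.mem_sphere, dist_zero_right]
    show ‖((‖u₀‖⁻¹ : ℝ):ℂ) • u₀‖ = 1
    rw [norm_smul]
    simp [abs_of_pos (inv_pos.mpr hn0), inv_mul_cancel₀ hn0.ne']
  have hg : Continuous fun x : V => (inner ℂ (B (x:H)) (x:H) : ℂ).re :=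
    Complex.continuous_re.comp
      (Continuous.inner (B.continuous.comp continuous_subtype_val) continuous_subtype_val)
  obtain ⟨x₀, hx₀s, hx₀min⟩ :=
    (isCompact_sphere (0:V) 1).exists_isMinOn hsne hg.continuousOn
  have hx₀n : ‖(x₀:H)‖ = 1 := by
    have := Metric.mem_sphere.mp hx₀s
    rw [dist_zero_right] at this
    exact this
  have hx₀0 : (x₀:H) ≠ 0 := fun h => by simp [h] at hx₀n
  refine ⟨(inner ℂ (B (x₀:H)) (x₀:H) : ℂ).re, hBpos _ hx₀0, ?_⟩
  intro u huV
  rcases eq_or_ne u 0 with rfl | hu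
  · simp
  have hun : 0 < ‖u‖ := norm_pos_iff.mpr hu
  set x : V := ⟨((‖u‖⁻¹ : ℝ):ℂ) • u, V.smul_mem _ huV⟩ with hx
  have hxs : x ∈ Metric.sphere (0:V) 1 := by
    simp only [Metric.mem_sphere, dist_zero_right]
    show ‖((‖u‖⁻¹ : ℝ):ℂ) • u‖ = 1
    rw [norm_smul]
    simp [abs_of_pos (inv_pos.mpr hun), inv_mul_cancel₀ hun.ne']
  have hmin := hx₀min hxs
  have hval : (inner ℂ (B (x:H)) (x:H) : ℂ).re = ‖u‖⁻¹^2 * (inner ℂ (B u) u : ℂ).re := by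
    rw [hx]
    exact re_inner_real_smul B u _
  simp only [Set.mem_setOf_eq, hval] at hmin
  have h2 : (inner ℂ (B (x₀:H)) (x₀:H) : ℂ).re * ‖u‖^2 ≤ (inner ℂ (B u) u : ℂ).re := by
    have := mul_le_mul_of_nonneg_right hmin (sq_nonneg ‖u‖)
    calc (inner ℂ (B (x₀:H)) (x₀:H) : ℂ).re * ‖u‖^2
        ≤ ‖u‖⁻¹^2 * (inner ℂ (B u) u : ℂ).re * ‖u‖^2 := this
    _ = (inner ℂ (B u) u : ℂ).re := by
        field_simp
  linarith [h2]

end TEaux3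

namespace TEaux3
open TEaux Module

variable {H : Type*} [NormedAddCommGroup H] [InnerProductSpace ℂ H]

lemma nonempty_nz {V : Submodule ℂ H} {j : ℕ} (hV : Module.finrank ℂ V = j) (hj : 1 ≤ j) :
    ∃ u : H, u ∈ V ∧ u ≠ 0 := by
  by_contra h
  push_neg at h
  have hbot : V = ⊥ := by
    rw [Submodule.eq_bot_iff]
    intro x hx
    by_contra hx0
    exact hx0 (h x hx)
  rw [hbot, finrank_bot] at hV
  omega

lemma bddAbove_ratio (T B : H →L[ℂ] H)
    (hBpos : ∀ u : H, u ≠ 0 → 0 < (inner ℂ (B u) u : ℂ).re)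
    (V : Submodule ℂ H) [FiniteDimensional ℂ V] :
    BddAbove (Set.range fun u : {u : H // u ∈ V ∧ u ≠ 0} => ratio T B u) := by
  obtain ⟨ε, hε, hεB⟩ := eps_B B hBpos V
  refine ⟨‖T‖/ε, ?_⟩
  rintro x ⟨⟨u, huV, hu⟩, rfl⟩
  have hreB : 0 < (inner ℂ (B u) u : ℂ).re := hBpos u hu
  simp only [ratio]
  rw [div_le_iff₀ hreB]
  calc (inner ℂ (T u) u : ℂ).re ≤ ‖T‖ * ‖u‖^2 := re_inner_le_opNorm T u
  _ = (‖T‖/ε) * (ε * ‖u‖^2) := by field_simp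
  _ ≤ (‖T‖/ε) * (inner ℂ (B u) u : ℂ).re := by
      apply mul_le_mul_of_nonneg_left (hεB u huV) (by positivity)

lemma le_supV (T B : H →L[ℂ] H)
    (hBpos : ∀ u : H, u ≠ 0 → 0 < (inner ℂ (B u) u : ℂ).re)
    (V : Submodule ℂ H) [FiniteDimensional ℂ V] {u : H} (huV : u ∈ V) (hu : u ≠ 0) :
    ratio T B u ≤ supV T B V :=
  le_ciSup (bddAbove_ratio T B hBpos V) ⟨u, huV, hu⟩

lemma supV_le (T B : H →L[ℂ] H) {V : Submodule ℂ H} {j : ℕ}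
    (hV : Module.finrank ℂ V = j) (hj : 1 ≤ j) {M : ℝ}
    (hM : ∀ u ∈ V, u ≠ 0 → ratio T B u ≤ M) : supV T B V ≤ M := by
  obtain ⟨u₀, hu₀V, hu₀⟩ := nonempty_nz hV hj
  haveI : Nonempty {u : H // u ∈ V ∧ u ≠ 0} := ⟨⟨u₀, hu₀V, hu₀⟩⟩
  exact ciSup_le fun u => hM u u.2.1 u.2.2

lemma fd_of_finrank {V : Submodule ℂ H} {j : ℕ} (hV : Module.finrank ℂ V = j)
    (hj : 1 ≤ j) : FiniteDimensional ℂ V :=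
  FiniteDimensional.of_finrank_pos (by omega)

/-- lower bound for the ratio of a coercive operator -/
lemma ratio_ge (T B : H →L[ℂ] H)
    (hBpos : ∀ u : H, u ≠ 0 → 0 < (inner ℂ (B u) u : ℂ).re)
    (hB : 0 < ‖B‖) {cT : ℝ} (hcT : 0 < cT)
    (hT : ∀ u : H, cT * ‖u‖^2 ≤ (inner ℂ (T u) u : ℂ).re) {u : H} (hu : u ≠ 0) :
    cT/‖B‖ ≤ ratio T B u := by
  have hreB : 0 < (inner ℂ (B u) u : ℂ).re := hBpos u hu
  simp only [ratio]
  rw [le_div_iff₀ hreB]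
  have hBu : (inner ℂ (B u) u : ℂ).re ≤ ‖B‖ * ‖u‖^2 := re_inner_le_opNorm B u
  have h1 : cT/‖B‖ * (inner ℂ (B u) u : ℂ).re ≤ cT/‖B‖ * (‖B‖ * ‖u‖^2) :=
    mul_le_mul_of_nonneg_left hBu (by positivity)
  have h2 : cT/‖B‖ * (‖B‖ * ‖u‖^2) = cT * ‖u‖^2 := by field_simp
  linarith [hT u]

lemma nonempty_Vj (hH : ¬ FiniteDimensional ℂ H) (j : ℕ) :
    Nonempty {V : Submodule ℂ H // Module.finrank ℂ V = j} := by
  have hrank : (j : Cardinal) ≤ Module.rank ℂ H := by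
    by_contra h
    push_neg at h
    apply hH
    by_contra h2
    have : Cardinal.aleph0 ≤ Module.rank ℂ H := by
      by_contra h3
      push_neg at h3
      exact h2 (IsNoetherian.iff_fg.mp (IsNoetherian.iff_rank_lt_aleph0.mpr h3))
    exact absurd ((Cardinal.nat_lt_aleph0 j).le.trans this) h.not_ge
  obtain ⟨f, hf⟩ := exists_linearIndependent_of_le_rank hrank
  refine ⟨⟨Submodule.span ℂ (Set.range f), ?_⟩⟩
  rw [finrank_span_eq_card hf, Fintype.card_fin]

lemma exists_Vj_le_W {W : Submodule ℂ H} {m j : ℕ} (hW : Module.finrank ℂ W = m)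
    (hj : 1 ≤ j) (hjm : j ≤ m) :
    ∃ V : Submodule ℂ H, V ≤ W ∧ Module.finrank ℂ V = j := by
  haveI : FiniteDimensional ℂ W := fd_of_finrank hW (le_trans hj hjm)
  obtain ⟨f, hf⟩ := exists_linearIndependent_of_le_finrank (n := j) (by omega : j ≤ finrank ℂ W)
  have hg : LinearIndependent ℂ (fun i => ((f i : H))) := by
    have := hf.map' W.subtype W.ker_subtype
    exact this
  refine ⟨Submodule.span ℂ (Set.range fun i => ((f i : H))), ?_, ?_⟩
  · rw [Submodule.span_le]
    rintro x ⟨i, rfl⟩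
    exact (f i).2
  · rw [finrank_span_eq_card hg, Fintype.card_fin]

/-- the range of `supV T B` over `j`-dimensional subspaces is bounded below
for a coercive `T`. -/
lemma bddBelow_supV (T B : H →L[ℂ] H)
    (hBpos : ∀ u : H, u ≠ 0 → 0 < (inner ℂ (B u) u : ℂ).re)
    (hB : 0 < ‖B‖) {cT : ℝ} (hcT : 0 < cT)
    (hT : ∀ u : H, cT * ‖u‖^2 ≤ (inner ℂ (T u) u : ℂ).re) {j : ℕ} (hj : 1 ≤ j) :
    BddBelow (Set.range fun V : {V : Submodule ℂ H // Module.finrank ℂ V = j} =>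
      supV T B V) := by
  refine ⟨cT/‖B‖, ?_⟩
  rintro x ⟨⟨V, hV⟩, rfl⟩
  haveI := fd_of_finrank hV hj
  obtain ⟨u₀, hu₀V, hu₀⟩ := nonempty_nz hV hj
  exact le_trans (ratio_ge T B hBpos hB hcT hT hu₀) (le_supV T B hBpos V hu₀V hu₀)

lemma minmax_ge (T B : H →L[ℂ] H)
    (hBpos : ∀ u : H, u ≠ 0 → 0 < (inner ℂ (B u) u : ℂ).re)
    (hH : ¬ FiniteDimensional ℂ H) {j : ℕ} (hj : 1 ≤ j) {x : ℝ}
    (hx : ∀ u : H, u ≠ 0 → x ≤ ratio T B u) :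
    x ≤ minmaxVal T B j := by
  haveI := nonempty_Vj hH j
  rw [minmax_eq]
  refine le_ciInf fun ⟨V, hV⟩ => ?_
  haveI := fd_of_finrank hV hj
  obtain ⟨u₀, hu₀V, hu₀⟩ := nonempty_nz hV hj
  exact le_trans (hx u₀ hu₀) (le_supV T B hBpos V hu₀V hu₀)

lemma minmax_le_supV (T B : H →L[ℂ] H)
    (hBpos : ∀ u : H, u ≠ 0 → 0 < (inner ℂ (B u) u : ℂ).re)
    (hB : 0 < ‖B‖) {cT : ℝ} (hcT : 0 < cT)
    (hT : ∀ u : H, cT * ‖u‖^2 ≤ (inner ℂ (T u) u : ℂ).re) {j : ℕ} (hj : 1 ≤ j)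
    {V : Submodule ℂ H} (hV : Module.finrank ℂ V = j) :
    minmaxVal T B j ≤ supV T B V := by
  rw [minmax_eq]
  exact ciInf_le (bddBelow_supV T B hBpos hB hcT hT hj) ⟨V, hV⟩

end TEaux3

namespace TEaux3
open TEaux Module

variable {H : Type*} [NormedAddCommGroup H] [InnerProductSpace ℂ H]

lemma ratio_pert {T T' B : H →L[ℂ] H}
    (hBpos : ∀ u : H, u ≠ 0 → 0 < (inner ℂ (B u) u : ℂ).re)
    {cT η : ℝ} (hcT : 0 < cT) (hη : 0 ≤ η)
    (hT : ∀ u : H, cT * ‖u‖^2 ≤ (inner ℂ (T u) u : ℂ).re)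
    (hd : ‖T' - T‖ ≤ cT * η) {u : H} (hu : u ≠ 0) :
    ratio T' B u ≤ (1+η) * ratio T B u ∧ (1-η) * ratio T B u ≤ ratio T' B u := by
  have hreB : 0 < (inner ℂ (B u) u : ℂ).re := hBpos u hu
  have heq : (inner ℂ ((T' - T) u) u : ℂ).re
      = (inner ℂ (T' u) u : ℂ).re - (inner ℂ (T u) u : ℂ).re := by
    simp [ContinuousLinearMap.sub_apply, inner_sub_left, Complex.sub_re]
  have h1 : |(inner ℂ (T' u) u : ℂ).re - (inner ℂ (T u) u : ℂ).re| ≤ η * (inner ℂ (T u) u : ℂ).re := by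
    rw [← heq]
    calc |(inner ℂ ((T' - T) u) u : ℂ).re| ≤ ‖T' - T‖ * ‖u‖^2 := abs_re_inner_le_opNorm _ u
    _ ≤ (cT * η) * ‖u‖^2 := mul_le_mul_of_nonneg_right hd (sq_nonneg _)
    _ = η * (cT * ‖u‖^2) := by ring
    _ ≤ η * (inner ℂ (T u) u : ℂ).re := mul_le_mul_of_nonneg_left (hT u) hη
  rw [abs_le] at h1
  constructor
  · simp only [ratio]
    rw [← mul_div_assoc, div_le_div_iff_of_pos_right hreB]
    nlinarith [h1.2]
  · simp only [ratio]
    rw [← mul_div_assoc, div_le_div_iff_of_pos_right hreB]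
    nlinarith [h1.1]

lemma minmax_le_mul (T T' B : H →L[ℂ] H)
    (hBpos : ∀ u : H, u ≠ 0 → 0 < (inner ℂ (B u) u : ℂ).re)
    (hB : 0 < ‖B‖) (hH : ¬ FiniteDimensional ℂ H)
    {cT' : ℝ} (hcT' : 0 < cT')
    (hT' : ∀ u : H, cT' * ‖u‖^2 ≤ (inner ℂ (T' u) u : ℂ).re)
    {j : ℕ} (hj : 1 ≤ j) {K : ℝ} (hK : 0 < K)
    (hpt : ∀ u : H, u ≠ 0 → ratio T' B u ≤ K * ratio T B u) :
    minmaxVal T' B j ≤ K * minmaxVal T B j := by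
  haveI := nonempty_Vj hH j
  have h : ∀ (V : Submodule ℂ H), Module.finrank ℂ V = j →
      minmaxVal T' B j ≤ K * supV T B V := by
    intro V hV
    haveI := fd_of_finrank hV hj
    calc minmaxVal T' B j ≤ supV T' B V := minmax_le_supV T' B hBpos hB hcT' hT' hj hV
    _ ≤ K * supV T B V := by
        refine supV_le T' B hV hj fun u huV hu => ?_
        exact (hpt u hu).trans
          (mul_le_mul_of_nonneg_left (le_supV T B hBpos V huV hu) hK.le)
  have h2 : minmaxVal T' B j / K ≤ minmaxVal T B j := by
    rw [minmax_eq T B j]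
    refine le_ciInf fun ⟨V, hV⟩ => ?_
    rw [div_le_iff₀ hK, mul_comm]
    exact h V hV
  rw [div_le_iff₀ hK, mul_comm] at h2
  exact h2

end TEaux3

namespace TEaux3
open TEaux Module

variable {H : Type*} [NormedAddCommGroup H] [InnerProductSpace ℂ H]

lemma lam_continuousOn (A : ℝ → (H →L[ℂ] H)) (s : Set ℝ)
    (hAcont : ContinuousOn A s) (hAcoer : ∀ k ∈ s, OpCoercive (A k))
    (B : H →L[ℂ] H) (hBpos : ∀ u : H, u ≠ 0 → 0 < (inner ℂ (B u) u : ℂ).re)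
    (hB : 0 < ‖B‖) (hH : ¬ FiniteDimensional ℂ H) {j : ℕ} (hj : 1 ≤ j) :
    ContinuousOn (fun k => minmaxVal (A k) B j) s := by
  intro k2 hk2
  obtain ⟨c2, hc2, hco2⟩ := hAcoer k2 hk2
  set L := minmaxVal (A k2) B j with hL
  have hLlb : c2/‖B‖ ≤ L :=
    minmax_ge (A k2) B hBpos hH hj fun u hu => ratio_ge (A k2) B hBpos hB hc2 hco2 hu
  have hL0 : 0 < L := lt_of_lt_of_le (by positivity) hLlb
  rw [Metric.continuousWithinAt_iff]
  intro ε hε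
  set εA := min (c2/2) (c2*ε/(2*(L+1))) with hεA
  have hεApos : 0 < εA := lt_min (by positivity) (by positivity)
  obtain ⟨d, hd, hspec⟩ := Metric.continuousWithinAt_iff.mp (hAcont k2 hk2) εA hεApos
  refine ⟨d, hd, fun {k} hk hdk => ?_⟩
  have hAd : ‖A k - A k2‖ < εA := by
    rw [← dist_eq_norm]
    exact hspec hk hdk
  set η := ‖A k - A k2‖ / c2 with hηdef
  have hη0 : 0 ≤ η := by positivity
  have hηhalf : η ≤ 1/2 := by
    rw [hηdef, div_le_iff₀ hc2]
    have : εA ≤ c2/2 := min_le_left _ _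
    linarith
  have h1mη : 0 < 1 - η := by linarith
  have hd' : ‖A k - A k2‖ ≤ c2 * η := by
    rw [hηdef, mul_div_cancel₀ _ hc2.ne']
  have hcok : ∀ u : H, (c2/2) * ‖u‖^2 ≤ (inner ℂ (A k u) u : ℂ).re := by
    intro u
    have habs : |(inner ℂ (A k u) u : ℂ).re - (inner ℂ (A k2 u) u : ℂ).re| ≤ ‖A k - A k2‖ * ‖u‖^2 := by
      have heq : (inner ℂ ((A k - A k2) u) u : ℂ).re
          = (inner ℂ (A k u) u : ℂ).re - (inner ℂ (A k2 u) u : ℂ).re := by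
        simp [ContinuousLinearMap.sub_apply, inner_sub_left, Complex.sub_re]
      rw [← heq]
      exact abs_re_inner_le_opNorm _ u
    have hAd2 : ‖A k - A k2‖ ≤ c2/2 := le_trans hAd.le (min_le_left _ _)
    have h2 := abs_le.mp habs
    have h3 : ‖A k - A k2‖ * ‖u‖^2 ≤ (c2/2) * ‖u‖^2 :=
      mul_le_mul_of_nonneg_right hAd2 (sq_nonneg _)
    have h4 := hco2 u
    nlinarith [h2.1]
  have hpt := fun (u : H) (hu : u ≠ 0) => ratio_pert (T := A k2) (T' := A k) hBpos hc2 hη0 hco2 hd' hu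
  have h1 : minmaxVal (A k) B j ≤ (1+η) * L :=
    minmax_le_mul (A k2) (A k) B hBpos hB hH (by positivity : (0:ℝ) < c2/2) hcok hj
      (by linarith : (0:ℝ) < 1+η) (fun u hu => (hpt u hu).1)
  have h2 : L ≤ (1-η)⁻¹ * minmaxVal (A k) B j := by
    refine minmax_le_mul (A k) (A k2) B hBpos hB hH hc2 hco2 hj
      (by positivity : (0:ℝ) < (1-η)⁻¹) (fun u hu => ?_)
    rw [le_inv_mul_iff₀ h1mη]
    exact (hpt u hu).2
  have h2' : (1-η) * L ≤ minmaxVal (A k) B j := by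
    rw [← le_inv_mul_iff₀ h1mη]
    exact h2
  have hηs : η < ε/(2*(L+1)) := by
    have h5 : εA ≤ c2*ε/(2*(L+1)) := min_le_right _ _
    rw [hηdef, div_lt_iff₀ hc2]
    calc ‖A k - A k2‖ < εA := hAd
    _ ≤ c2*ε/(2*(L+1)) := h5
    _ = ε/(2*(L+1)) * c2 := by ring
  have hfin : |minmaxVal (A k) B j - L| ≤ η * L := by
    rw [abs_le]
    constructor <;> nlinarith
  rw [Real.dist_eq]
  have : η * L < ε := by
    have := mul_lt_mul_of_pos_right hηs hL0
    have hLL : ε/(2*(L+1)) * L ≤ ε/2 := by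
      rw [div_mul_eq_mul_div, div_le_div_iff₀ (by positivity) (by norm_num)]
      nlinarith
    linarith
  calc |minmaxVal (A k) B j - L| ≤ η * L := hfin
  _ < ε := this

end TEaux3

set_option maxHeartbeats 2000000 in
open TEaux TEaux2 TEaux3 Module in
theorem stmt2 {H : Type*} [NormedAddCommGroup H] [InnerProductSpace ℂ H] [CompleteSpace H]
    [TopologicalSpace.SeparableSpace H] (hH : ¬ FiniteDimensional ℂ H)
    (k₀ k₁ : ℝ) (hk₀ : 0 < k₀) (hk₀k₁ : k₀ < k₁)
    (A : ℝ → (H →L[ℂ] H))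
    (hAcont : ContinuousOn A (Set.Icc k₀ k₁))
    (hAsa : ∀ k ∈ Set.Icc k₀ k₁, IsSelfAdjoint (A k))
    (hAcoer : ∀ k ∈ Set.Icc k₀ k₁, OpCoercive (A k))
    (B : H →L[ℂ] H) (hBc : IsCompactOperator B) (hBsa : IsSelfAdjoint B)
    (hBpos : ∀ u : H, u ≠ 0 → 0 < (inner ℂ (B u) u : ℂ).re)
    (m : ℕ) (hm : 1 ≤ m)
    (hpos : ∀ u : H, u ≠ 0 →
      0 < (inner ℂ (A k₀ u - ((k₀ : ℂ) ^ 2) • B u) u : ℂ).re)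
    (hneg : ∃ W : Submodule ℂ H, Module.finrank ℂ W = m ∧
      ∀ u ∈ W, (inner ℂ (A k₁ u - ((k₁ : ℂ) ^ 2) • B u) u : ℂ).re ≤ 0) :
    (∀ j : ℕ, 1 ≤ j → j ≤ m →
      ∃ k ∈ Set.Icc k₀ k₁, minmaxVal (A k) B j = k ^ 2) ∧
    (∃ k ∈ Set.Icc k₀ k₁, ∃ u : H, u ≠ 0 ∧ A k u = ((k : ℂ) ^ 2) • B u) := by
  classical
  obtain ⟨W, hWm, hWneg⟩ := hneg
  have hIcc0 : k₀ ∈ Set.Icc k₀ k₁ := ⟨le_refl _, hk₀k₁.le⟩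
  have hIcc1 : k₁ ∈ Set.Icc k₀ k₁ := ⟨hk₀k₁.le, le_refl _⟩
  have hk₁pos : 0 < k₁ := lt_trans hk₀ hk₀k₁
  haveI : Nontrivial H := by
    by_contra h
    rw [not_nontrivial_iff_subsingleton] at h
    exact hH inferInstance
  obtain ⟨u₀, hu₀⟩ := exists_ne (0 : H)
  have hBnorm : 0 < ‖B‖ := by
    have h1 := hBpos u₀ hu₀
    have h2 := TEaux.re_inner_le_opNorm B u₀
    by_contra h
    push_neg at h
    have h3 : ‖B‖ * ‖u₀‖^2 ≤ 0 * ‖u₀‖^2 := mul_le_mul_of_nonneg_right h (sq_nonneg _)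
    simp at h3
    linarith
  -- the quadratic form
  set Q : ℝ → H → ℝ := fun k u =>
    (inner ℂ (A k u) u : ℂ).re - k^2 * (inner ℂ (B u) u : ℂ).re with hQdef
  have hQvec : ∀ (k : ℝ) (u : H),
      (inner ℂ (A k u - ((k:ℂ)^2) • B u) u : ℂ).re = Q k u := by
    intro k u
    rw [inner_sub_left, inner_smul_left, Complex.sub_re]
    have hconj : (starRingEnd ℂ) ((k:ℂ)^2) = ((k^2 : ℝ) : ℂ) := by
      rw [map_pow, Complex.conj_ofReal, ← Complex.ofReal_pow]
    rw [hconj, Complex.re_ofReal_mul]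
  have hQS : ∀ (k : ℝ) (u : H),
      (inner ℂ ((A k - ((k:ℂ)^2) • B) u) u : ℂ).re = Q k u := by
    intro k u
    rw [ContinuousLinearMap.sub_apply, ContinuousLinearMap.smul_apply]
    exact hQvec k u
  have hpos' : ∀ u : H, u ≠ 0 → 0 < Q k₀ u := by
    intro u hu
    have := hpos u hu
    rwa [hQvec k₀ u] at this
  have hSsa : ∀ k ∈ Set.Icc k₀ k₁, IsSelfAdjoint (A k - ((k:ℂ)^2) • B) := by
    intro k hk
    refine (hAsa k hk).sub (IsSelfAdjoint.smul ?_ hBsa)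
    show (starRingEnd ℂ) ((k:ℂ)^2) = (k:ℂ)^2
    rw [map_pow, Complex.conj_ofReal]
  have hCcomp : ∀ k : ℝ, IsCompactOperator (⇑(((k:ℂ)^2) • B)) := by
    intro k
    exact hBc.smul ((k:ℂ)^2)
  -- key coercivity fact
  have key : ∀ k ∈ Set.Icc k₀ k₁, (∀ u : H, u ≠ 0 → 0 < Q k u) →
      ∃ δ : ℝ, 0 < δ ∧ ∀ u : H, δ * ‖u‖^2 ≤ Q k u := by
    intro k hk hQpos
    obtain ⟨cA, hcA, hAco⟩ := hAcoer k hk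
    have hinj : ∀ u : H, (A k - ((k:ℂ)^2) • B) u = 0 → u = 0 := by
      intro u hSu
      by_contra hu
      have h1 := hQpos u hu
      rw [← hQS k u, hSu] at h1
      simp at h1
    obtain ⟨c, hc, hlow⟩ :=
      TEaux2.boundedBelow_of_injective (A k) (((k:ℂ)^2) • B) hcA hAco (hCcomp k) hinj
    have hQ0 : ∀ w : H, 0 ≤ (inner ℂ ((A k - ((k:ℂ)^2) • B) w) w : ℂ).re := by
      intro w
      rcases eq_or_ne w 0 with rfl | hw
      · simp
      · rw [hQS k w]
        exact (hQpos w hw).le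
    have hcoer := TEaux.coercive_of_boundedBelow (hSsa k hk) hQ0 hc hlow
    have hSnorm : 0 < ‖A k - ((k:ℂ)^2) • B‖ := by
      by_contra hns
      push_neg at hns
      have hS0 : A k - ((k:ℂ)^2) • B = 0 := by
        ext x
        have h5 := le_antisymm (le_trans ((A k - ((k:ℂ)^2) • B).le_opNorm x)
          (by nlinarith [norm_nonneg x])) (norm_nonneg _)
        simpa using h5
      have h6 := hQpos u₀ hu₀
      rw [← hQS k u₀, hS0] at h6
      simp at h6
    refine ⟨c^2/‖A k - ((k:ℂ)^2) • B‖, by positivity, fun u => ?_⟩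
    have := hcoer u
    rwa [hQS k u] at this
  -- the set P and its supremum
  set P : Set ℝ := {k | k ∈ Set.Icc k₀ k₁ ∧ ∀ u : H, u ≠ 0 → 0 < Q k u} with hP
  have hk₀P : k₀ ∈ P := ⟨hIcc0, hpos'⟩
  have hPne : P.Nonempty := ⟨k₀, hk₀P⟩
  have hPbdd : BddAbove P := ⟨k₁, fun k hk => hk.1.2⟩
  set ks := sSup P with hks
  have hksIcc : ks ∈ Set.Icc k₀ k₁ :=
    ⟨le_csSup hPbdd hk₀P, csSup_le hPne fun k hk => hk.1.2⟩
  have hks0 : 0 < ks := lt_of_lt_of_le hk₀ hksIcc.1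
  have hQcont : ∀ u : H, ContinuousOn (fun k => Q k u) (Set.Icc k₀ k₁) := by
    intro u
    apply ContinuousOn.sub
    · exact (Complex.continuous_re.comp
        (Continuous.inner ((ContinuousLinearMap.apply ℂ H u).continuous)
          continuous_const)).comp_continuousOn hAcont
    · exact ((continuous_pow 2).mul continuous_const).continuousOn
  have hQks_nonneg : ∀ u : H, 0 ≤ Q ks u := by
    intro u
    rcases eq_or_ne u 0 with rfl | hu
    · simp [hQdef]
    have hFclosed : IsClosed (Set.Icc k₀ k₁ ∩ (fun k => Q k u) ⁻¹' Set.Ici 0) :=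
      (hQcont u).preimage_isClosed_of_isClosed isClosed_Icc isClosed_Ici
    have hPF : P ⊆ Set.Icc k₀ k₁ ∩ (fun k => Q k u) ⁻¹' Set.Ici 0 :=
      fun k hk => ⟨hk.1, (hk.2 u hu).le⟩
    have hksF : ks ∈ Set.Icc k₀ k₁ ∩ (fun k => Q k u) ⁻¹' Set.Ici 0 :=
      (hFclosed.closure_subset_iff.mpr hPF) (csSup_mem_closure hPne hPbdd)
    exact hksF.2
  -- conjunct 2
  have conj2 : ∃ k ∈ Set.Icc k₀ k₁, ∃ u : H, u ≠ 0 ∧ A k u = ((k:ℂ)^2) • B u := by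
    by_cases hzero : ∃ u : H, u ≠ 0 ∧ Q ks u = 0
    · obtain ⟨u, hu, hQu⟩ := hzero
      have hker := TEaux.kernel_of_quad_zero (hSsa ks hksIcc)
        (fun w => by rw [hQS]; exact hQks_nonneg w) (u := u)
        (by rw [hQS]; exact hQu)
      refine ⟨ks, hksIcc, u, hu, ?_⟩
      rw [ContinuousLinearMap.sub_apply, ContinuousLinearMap.smul_apply] at hker
      exact sub_eq_zero.mp hker
    · push_neg at hzero
      have hQkspos : ∀ u : H, u ≠ 0 → 0 < Q ks u := fun u hu =>
        lt_of_le_of_ne (hQks_nonneg u) (Ne.symm (hzero u hu))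
      obtain ⟨δ, hδ, hδQ⟩ := key ks hksIcc hQkspos
      exfalso
      have hlt : ks < k₁ := by
        rcases lt_or_eq_of_le hksIcc.2 with h | h
        · exact h
        · exfalso
          obtain ⟨w, hwW, hw⟩ := TEaux3.nonempty_nz hWm hm
          have h1 := hWneg w hwW
          rw [hQvec k₁ w] at h1
          have h2 := hQkspos w hw
          rw [h] at h2
          linarith
      obtain ⟨d, hd, hdspec⟩ :=
        Metric.continuousWithinAt_iff.mp (hAcont ks hksIcc) (δ/2) (by positivity)
      set ε' := min (min (d/2) (k₁ - ks)) (δ/(1 + 8*k₁*‖B‖)) with hε'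
      have hε'pos : 0 < ε' :=
        lt_min (lt_min (by positivity) (by linarith)) (by positivity)
      set k := ks + ε' with hkdef
      have hε'le1 : ε' ≤ k₁ - ks := le_trans (min_le_left _ _) (min_le_right _ _)
      have hε'le2 : ε' ≤ d/2 := le_trans (min_le_left _ _) (min_le_left _ _)
      have hε'le3 : ε' ≤ δ/(1 + 8*k₁*‖B‖) := min_le_right _ _
      have hkIcc : k ∈ Set.Icc k₀ k₁ := ⟨by linarith [hksIcc.1], by linarith⟩
      have hdistk : dist k ks < d := by
        rw [Real.dist_eq, hkdef]
        rw [show ks + ε' - ks = ε' by ring, abs_of_pos hε'pos]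
        linarith
      have hAclose : ‖A k - A ks‖ < δ/2 := by
        rw [← dist_eq_norm]
        exact hdspec hkIcc hdistk
      have hkP : k ∈ P := by
        refine ⟨hkIcc, fun u hu => ?_⟩
        have habs : |(inner ℂ (A k u) u : ℂ).re - (inner ℂ (A ks u) u : ℂ).re|
            ≤ ‖A k - A ks‖ * ‖u‖^2 := by
          have heq : (inner ℂ ((A k - A ks) u) u : ℂ).re
              = (inner ℂ (A k u) u : ℂ).re - (inner ℂ (A ks u) u : ℂ).re := by
            simp [ContinuousLinearMap.sub_apply, inner_sub_left, Complex.sub_re]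
          rw [← heq]
          exact abs_re_inner_le_opNorm _ u
        have hup : 0 < ‖u‖^2 := pow_pos (norm_pos_iff.mpr hu) 2
        have h2 : Q k u = Q ks u + ((inner ℂ (A k u) u : ℂ).re - (inner ℂ (A ks u) u : ℂ).re)
            - (k^2 - ks^2) * (inner ℂ (B u) u : ℂ).re := by
          simp only [hQdef]
          ring
        have hksq : 0 ≤ k^2 - ks^2 := by nlinarith [hks0, hε'pos]
        have h3 : (k^2 - ks^2) * (inner ℂ (B u) u : ℂ).re
            ≤ (k^2 - ks^2) * (‖B‖ * ‖u‖^2) :=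
          mul_le_mul_of_nonneg_left (re_inner_le_opNorm B u) hksq
        have h4 : k^2 - ks^2 ≤ ε' * (2*k₁) := by nlinarith [hksIcc.2, hε'pos, hε'le1]
        have h5 : ε' * (2*k₁) * ‖B‖ ≤ δ/4 := by
          have hden : (0:ℝ) < 1 + 8*k₁*‖B‖ := by positivity
          have h6 : ε' * (2*k₁*‖B‖) ≤ δ/(1 + 8*k₁*‖B‖) * (2*k₁*‖B‖) :=
            mul_le_mul_of_nonneg_right hε'le3 (by positivity)
          have h7 : δ/(1 + 8*k₁*‖B‖) * (2*k₁*‖B‖) ≤ δ/4 := by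
            rw [div_mul_eq_mul_div, div_le_div_iff₀ hden (by norm_num)]
            nlinarith
          calc ε' * (2*k₁) * ‖B‖ = ε' * (2*k₁*‖B‖) := by ring
          _ ≤ δ/(1 + 8*k₁*‖B‖) * (2*k₁*‖B‖) := h6
          _ ≤ δ/4 := h7
        have h8 : (k^2 - ks^2) * (‖B‖ * ‖u‖^2) ≤ (δ/4) * ‖u‖^2 := by
          have h9 : (k^2 - ks^2) * ‖B‖ ≤ δ/4 := by
            calc (k^2 - ks^2) * ‖B‖ ≤ ε' * (2*k₁) * ‖B‖ :=
                  mul_le_mul_of_nonneg_right h4 hBnorm.le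
            _ ≤ δ/4 := h5
          calc (k^2 - ks^2) * (‖B‖ * ‖u‖^2) = ((k^2 - ks^2) * ‖B‖) * ‖u‖^2 := by ring
          _ ≤ (δ/4) * ‖u‖^2 := mul_le_mul_of_nonneg_right h9 (sq_nonneg _)
        have h10 := hδQ u
        have h11 : ‖A k - A ks‖ * ‖u‖^2 ≤ (δ/2) * ‖u‖^2 :=
          mul_le_mul_of_nonneg_right hAclose.le (sq_nonneg _)
        have h12 := abs_le.mp habs
        clear_value Q P k ks ε'
        nlinarith [h12.1, mul_pos hδ hup]
      have hle := le_csSup hPbdd hkP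
      rw [hkdef] at hle
      linarith
  refine ⟨?_, conj2⟩
  -- conjunct 1
  intro j hj hjm
  have hlamcont : ContinuousOn (fun k => minmaxVal (A k) B j) (Set.Icc k₀ k₁) :=
    TEaux3.lam_continuousOn A (Set.Icc k₀ k₁) hAcont hAcoer B hBpos hBnorm hH hj
  -- lower bound at k₀
  obtain ⟨δ₀, hδ₀, hδ₀Q⟩ := key k₀ hIcc0 hpos'
  have hlow : k₀^2 + δ₀/‖B‖ ≤ minmaxVal (A k₀) B j := by
    refine TEaux3.minmax_ge (A k₀) B hBpos hH hj fun u hu => ?_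
    have hreB : 0 < (inner ℂ (B u) u : ℂ).re := hBpos u hu
    have h1 : δ₀/‖B‖ * (inner ℂ (B u) u : ℂ).re ≤ δ₀ * ‖u‖^2 := by
      have h2 : δ₀/‖B‖ * (inner ℂ (B u) u : ℂ).re ≤ δ₀/‖B‖ * (‖B‖ * ‖u‖^2) :=
        mul_le_mul_of_nonneg_left (re_inner_le_opNorm B u) (by positivity)
      have h3 : δ₀/‖B‖ * (‖B‖ * ‖u‖^2) = δ₀ * ‖u‖^2 := by
        field_simp
      linarith
    have h4 := hδ₀Q u
    simp only [TEaux3.ratio]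
    rw [le_div_iff₀ hreB]
    have h5 : Q k₀ u = (inner ℂ (A k₀ u) u : ℂ).re - k₀^2 * (inner ℂ (B u) u : ℂ).re := rfl
    nlinarith
  have hlow' : k₀^2 < minmaxVal (A k₀) B j := by
    have : 0 < δ₀/‖B‖ := by positivity
    linarith
  -- upper bound at k₁
  have hup : minmaxVal (A k₁) B j ≤ k₁^2 := by
    obtain ⟨V, hVW, hVj⟩ := TEaux3.exists_Vj_le_W hWm hj hjm
    obtain ⟨c1, hc1, hco1⟩ := hAcoer k₁ hIcc1
    calc minmaxVal (A k₁) B j ≤ TEaux3.supV (A k₁) B V :=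
          TEaux3.minmax_le_supV (A k₁) B hBpos hBnorm hc1 hco1 hj hVj
    _ ≤ k₁^2 := by
        refine TEaux3.supV_le (A k₁) B hVj hj fun u huV hu => ?_
        have hreB : 0 < (inner ℂ (B u) u : ℂ).re := hBpos u hu
        have h1 := hWneg u (hVW huV)
        rw [hQvec k₁ u] at h1
        simp only [TEaux3.ratio]
        rw [div_le_iff₀ hreB]
        have h5 : Q k₁ u = (inner ℂ (A k₁ u) u : ℂ).re - k₁^2 * (inner ℂ (B u) u : ℂ).re := rfl
        nlinarith
  -- intermediate value theorem
  set f : ℝ → ℝ := fun k => minmaxVal (A k) B j - k^2 with hf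
  have hfcont : ContinuousOn f (Set.Icc k₀ k₁) :=
    hlamcont.sub ((continuous_pow 2).continuousOn)
  have hmem : (0:ℝ) ∈ Set.Icc (f k₁) (f k₀) := by
    constructor
    · simp only [hf]
      linarith
    · simp only [hf]
      linarith
  obtain ⟨k, hkmem, hk⟩ := intermediate_value_Icc' hk₀k₁.le hfcont hmem
  refine ⟨k, hkmem, ?_⟩
  have : minmaxVal (A k) B j - k^2 = 0 := hk
  linarith
end

section
/- Let H be an infinite-dimensional separable complex Hilbert space, let A be a bounded self-adjoint coercive operator on H, and let B be a compact self-adjoint operator on H with Re⟨B u, u⟩ > 0 for all u ≠ 0. For each integer j ≥ 1 let λ_j(A, B) be the j-th generalized min-max value. Then for every j ≥ 1: (a) λ_j(A, B) > 0; (b) λ_j(A, B) ≤ λ_{j+1}(A, B); (c) there exists u ∈ H, u ≠ 0, with A u = λ_j(A, B)·B u; and (d) λ_j(A, B) → ∞ as j → ∞. -/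
open scoped InnerProductSpace

set_option linter.unusedSectionVars false
set_option linter.unusedVariables false
set_option maxHeartbeats 1000000

section Helpers

variable {H : Type*} [NormedAddCommGroup H] [InnerProductSpace ℂ H] [CompleteSpace H]

/-- quadratic form of an operator -/
noncomputable def qf (T : H →L[ℂ] H) (u : H) : ℝ := (inner ℂ (T u) u : ℂ).re

lemma re_le_norm' (z : ℂ) : z.re ≤ ‖z‖ := by
  exact Complex.re_le_norm z

lemma qf_cont (T : H →L[ℂ] H) : Continuous (qf T) := by
  have : Continuous fun u : H => (inner ℂ (T u) u : ℂ) :=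
    Continuous.inner (T.continuous) continuous_id
  exact (Complex.continuous_re.comp this)

lemma inner_symm_re {T : H →L[ℂ] H} (hT : IsSelfAdjoint T) (x y : H) :
    (inner ℂ (T y) x : ℂ).re = (inner ℂ (T x) y : ℂ).re := by
  have h1 : (inner ℂ (T y) x : ℂ) = inner ℂ y (T x) := hT.isSymmetric y x
  rw [h1, ← inner_conj_symm (T x) y]
  exact (Complex.conj_re _)

lemma qf_add {T : H →L[ℂ] H} (hT : IsSelfAdjoint T) (x y : H) :
    qf T (x + y) = qf T x + qf T y + 2 * (inner ℂ (T x) y : ℂ).re := by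
  have h : (inner ℂ (T (x+y)) (x+y) : ℂ)
      = inner ℂ (T x) x + inner ℂ (T x) y + inner ℂ (T y) x + inner ℂ (T y) y := by
    rw [map_add]; rw [inner_add_left, inner_add_right, inner_add_right]; ring
  unfold qf
  rw [h]
  simp only [Complex.add_re]
  have h2 := inner_symm_re hT x y
  linarith

lemma qf_smul_real (T : H →L[ℂ] H) (t : ℝ) (x : H) :
    qf T ((t:ℂ) • x) = t^2 * qf T x := by
  unfold qf
  rw [map_smul, inner_smul_left, inner_smul_right]
  simp [Complex.ofReal_mul]
  ring

lemma qf_neg (T : H →L[ℂ] H) (x : H) : qf T (-x) = qf T x := by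
  have h : ((-1 : ℝ) : ℂ) • x = -x := by push_cast; simp
  rw [← h, qf_smul_real]; ring

lemma qf_sub {T : H →L[ℂ] H} (hT : IsSelfAdjoint T) (x y : H) :
    qf T (x - y) = qf T x + qf T y - 2 * (inner ℂ (T x) y : ℂ).re := by
  have h := qf_add hT x (-y)
  rw [sub_eq_add_neg, h, qf_neg]
  have h2 : (inner ℂ (T x) (-y) : ℂ) = - inner ℂ (T x) y := by rw [inner_neg_right]
  rw [h2]; simp; ring

lemma qf_B_le (B : H →L[ℂ] H) (u : H) : qf B u ≤ ‖B‖ * ‖u‖^2 := by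
  unfold qf
  calc (inner ℂ (B u) u : ℂ).re ≤ ‖(inner ℂ (B u) u : ℂ)‖ := re_le_norm' _
    _ ≤ ‖B u‖ * ‖u‖ := norm_inner_le_norm _ _
    _ ≤ (‖B‖ * ‖u‖) * ‖u‖ := by
        have := B.le_opNorm u
        nlinarith [norm_nonneg (B u), norm_nonneg u]
    _ = ‖B‖ * ‖u‖^2 := by ring

lemma qf_inner_le (B : H →L[ℂ] H) (u v : H) : (inner ℂ (B u) v : ℂ).re ≤ ‖B u‖ * ‖v‖ :=
  le_trans (re_le_norm' _) (norm_inner_le_norm _ _)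

/-- the subspace of vectors orthogonal to all `A (u i)` -/
noncomputable def Wfam (A : H →L[ℂ] H) {n : ℕ} (u : Fin n → H) : Submodule ℂ H :=
  (Submodule.span ℂ (Set.range fun i => A (u i)))ᗮ

lemma mem_Wfam {A : H →L[ℂ] H} {n : ℕ} {u : Fin n → H} {x : H} :
    x ∈ Wfam A u ↔ ∀ i, (inner ℂ (A (u i)) x : ℂ) = 0 := by
  constructor
  · intro hx i
    exact (Submodule.mem_orthogonal _ _).1 hx _ (Submodule.subset_span ⟨i, rfl⟩)
  · intro h
    rw [Wfam, Submodule.mem_orthogonal]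
    intro v hv
    induction hv using Submodule.span_induction with
    | mem y hy => obtain ⟨i, rfl⟩ := hy; exact h i
    | zero => simp
    | add y z _ _ hy hz => rw [inner_add_left, hy, hz]; simp
    | smul c y _ hy => rw [inner_smul_left, hy]; simp

lemma Wfam_isClosed (A : H →L[ℂ] H) {n : ℕ} (u : Fin n → H) :
    IsClosed (Wfam A u : Set H) := Submodule.isClosed_orthogonal _

lemma Wfam_ne_bot (hH : ¬ FiniteDimensional ℂ H) (A : H →L[ℂ] H) {n : ℕ} (u : Fin n → H) :
    Wfam A u ≠ ⊥ := by
  intro hbot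
  set K := Submodule.span ℂ (Set.range fun i => A (u i)) with hK
  have hfd : FiniteDimensional ℂ K :=
    FiniteDimensional.span_of_finite ℂ (Set.finite_range _)
  have htop : K = ⊤ := Submodule.orthogonal_eq_bot_iff.1 hbot
  have h2 : FiniteDimensional ℂ (⊤ : Submodule ℂ H) := htop ▸ hfd
  exact hH (Submodule.topEquiv.finiteDimensional)

/-- a bounded sequence has a subsequence along which `B` converges -/
lemma exists_cauchy_subseq {B : H →L[ℂ] H} (hB : IsCompactOperator B)
    (u : ℕ → H) (R₀ : ℝ) (hu : ∀ n, ‖u n‖ ≤ R₀) :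
    ∃ φ : ℕ → ℕ, StrictMono φ ∧ CauchySeq (fun n => B (u (φ n))) := by
  obtain ⟨K, hK, hKmem⟩ := hB
  obtain ⟨r, hr, hball⟩ := Metric.mem_nhds_iff.1 hKmem
  set t : ℝ := r / (2 * (R₀ + 1)) with ht
  have hR₀ : 0 ≤ R₀ := le_trans (norm_nonneg _) (hu 0)
  have htpos : 0 < t := by positivity
  have hmem : ∀ n, B ((t:ℂ) • u n) ∈ K := by
    intro n
    apply hball
    simp only [Metric.mem_ball, dist_zero_right, norm_smul]
    have h1 : ‖(t:ℂ)‖ = t := by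
      rw [Complex.norm_real]; exact abs_of_pos htpos
    rw [h1]
    calc t * ‖u n‖ ≤ t * R₀ := by nlinarith [hu n]
      _ < r := by rw [ht]; rw [div_mul_eq_mul_div]; rw [div_lt_iff₀ (by linarith)]; nlinarith
  set K' : Set H := (fun x => ((t:ℂ))⁻¹ • x) '' K with hK'
  have hK'c : IsCompact K' := hK.image (continuous_const_smul _)
  have hmem' : ∀ n, B (u n) ∈ K' := by
    intro n
    refine ⟨B ((t:ℂ) • u n), hmem n, ?_⟩
    show ((t:ℂ))⁻¹ • B ((t:ℂ) • u n) = B (u n)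
    rw [map_smul, smul_smul, inv_mul_cancel₀ (by exact_mod_cast ne_of_gt htpos), one_smul]
  obtain ⟨a, _, φ, hφ, hconv⟩ := hK'c.tendsto_subseq hmem'
  exact ⟨φ, hφ, hconv.cauchySeq⟩

/-- totally bounded image: finite ε-net for `B` of a ball -/
lemma exists_finite_net {B : H →L[ℂ] H} (hB : IsCompactOperator B)
    (R₀ ε : ℝ) (hR₀ : 0 ≤ R₀) (hε : 0 < ε) :
    ∃ t : Set H, t.Finite ∧ ∀ x : H, ‖x‖ ≤ R₀ → ∃ y ∈ t, ‖B x - y‖ < ε := by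
  obtain ⟨K, hK, hKmem⟩ := hB
  obtain ⟨r, hr, hball⟩ := Metric.mem_nhds_iff.1 hKmem
  set t : ℝ := r / (2 * (R₀ + 1)) with ht
  have htpos : 0 < t := by positivity
  set K' : Set H := (fun x => ((t:ℂ))⁻¹ • x) '' K with hK'
  have hK'c : IsCompact K' := hK.image (continuous_const_smul _)
  obtain ⟨s, hsfin, hscov⟩ := (Metric.totallyBounded_iff.1 hK'c.totallyBounded) ε hε
  refine ⟨s, hsfin, ?_⟩
  intro x hx
  have hmem : B ((t:ℂ) • x) ∈ K := by
    apply hball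
    simp only [Metric.mem_ball, dist_zero_right, norm_smul]
    have h1 : ‖(t:ℂ)‖ = t := by rw [Complex.norm_real]; exact abs_of_pos htpos
    rw [h1]
    calc t * ‖x‖ ≤ t * R₀ := by nlinarith
      _ < r := by rw [ht, div_mul_eq_mul_div, div_lt_iff₀ (by linarith)]; nlinarith
  have hmem' : B x ∈ K' := by
    refine ⟨B ((t:ℂ) • x), hmem, ?_⟩
    show ((t:ℂ))⁻¹ • B ((t:ℂ) • x) = B x
    rw [map_smul, smul_smul, inv_mul_cancel₀ (by exact_mod_cast ne_of_gt htpos), one_smul]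
  obtain ⟨y, hy⟩ := Set.mem_iUnion₂.1 (hscov hmem')
  exact ⟨y, hy.1, by simpa [dist_eq_norm] using hy.2⟩

lemma qf_zero (T : H →L[ℂ] H) : qf T 0 = 0 := by
  unfold qf; rw [map_zero, inner_zero_left]; simp

/-- Key analytic lemma: the Rayleigh-type quotient attains its minimum on a
nontrivial closed subspace. -/
lemma exists_pencil_min {A B : H →L[ℂ] H} (hAsa : IsSelfAdjoint A)
    {c : ℝ} (hc : 0 < c) (hA : ∀ u : H, c * ‖u‖ ^ 2 ≤ qf A u)
    (hBc : IsCompactOperator B) (hBsa : IsSelfAdjoint B)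
    (hBpos : ∀ u : H, u ≠ 0 → 0 < qf B u)
    (W : Submodule ℂ H) (hWc : IsClosed (W : Set H)) (hW : W ≠ ⊥) :
    ∃ (x : H) (m : ℝ), x ∈ W ∧ x ≠ 0 ∧ 0 < m ∧ qf A x = m * qf B x ∧
      ∀ z ∈ W, m * qf B z ≤ qf A z := by
  obtain ⟨x₀, hx₀W, hx₀⟩ := Submodule.ne_bot_iff W |>.1 hW
  haveI : Nonempty {z : H // z ∈ W ∧ z ≠ 0} := ⟨⟨x₀, hx₀W, hx₀⟩⟩
  set R : {z : H // z ∈ W ∧ z ≠ 0} → ℝ := fun z => qf A z / qf B z with hR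
  have hRnn : ∀ z, 0 ≤ R z := by
    intro z
    apply div_nonneg
    · exact le_trans (by positivity) (hA z)
    · exact le_of_lt (hBpos z z.2.2)
  set m : ℝ := ⨅ z, R z with hm
  have hbdd : BddBelow (Set.range R) := ⟨0, by rintro _ ⟨z, rfl⟩; exact hRnn z⟩
  have hm0 : 0 ≤ m := Real.iInf_nonneg hRnn
  -- the key lower bound
  have hlow : ∀ z ∈ W, m * qf B z ≤ qf A z := by
    intro z hz
    by_cases hz0 : z = 0
    · simp [hz0, qf_zero]
    · have h1 : m ≤ R ⟨z, hz, hz0⟩ := ciInf_le hbdd _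
      have h2 : 0 < qf B z := hBpos z hz0
      rw [hR] at h1
      calc m * qf B z ≤ (qf A z / qf B z) * qf B z := by
            apply mul_le_mul_of_nonneg_right h1 (le_of_lt h2)
        _ = qf A z := div_mul_cancel₀ _ (ne_of_gt h2)
  -- minimizing sequence, normalized so that qf B = 1
  have hseq : ∀ n : ℕ, ∃ z : {z : H // z ∈ W ∧ z ≠ 0}, R z < m + 1/(n+1) := by
    intro n
    apply exists_lt_of_ciInf_lt
    rw [← hm]
    have : (0:ℝ) < 1/(n+1) := by positivity
    linarith
  choose v hv using hseq
  set u : ℕ → H := fun n => ((1 / Real.sqrt (qf B (v n)) : ℝ) : ℂ) • (v n : H) with hu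
  have hBv : ∀ n, 0 < qf B (v n) := fun n => hBpos _ (v n).2.2
  have huW : ∀ n, u n ∈ W := fun n => W.smul_mem _ (v n).2.1
  have huB : ∀ n, qf B (u n) = 1 := by
    intro n
    rw [hu]
    simp only
    rw [qf_smul_real]
    rw [div_pow, one_pow, Real.sq_sqrt (le_of_lt (hBv n))]
    rw [one_div, inv_mul_cancel₀ (ne_of_gt (hBv n))]
  have huA : ∀ n, qf A (u n) = R (v n) := by
    intro n
    rw [hu]
    simp only
    rw [qf_smul_real, div_pow, one_pow, Real.sq_sqrt (le_of_lt (hBv n))]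
    rw [hR]
    simp only [one_div]
    rw [inv_mul_eq_div]
  have huAlb : ∀ n, m ≤ qf A (u n) := by
    intro n
    have := hlow (u n) (huW n)
    rw [huB n] at this; linarith
  have huAub : ∀ n, qf A (u n) < m + 1/(n+1) := fun n => (huA n) ▸ hv n
  -- boundedness
  set R₀ : ℝ := Real.sqrt ((m+1)/c) with hR₀
  have hubd : ∀ n, ‖u n‖ ≤ R₀ := by
    intro n
    have h1 : c * ‖u n‖^2 ≤ qf A (u n) := hA _
    have h2 : qf A (u n) ≤ m + 1 := by
      have := huAub n
      have h3 : (1:ℝ)/(n+1) ≤ 1 := by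
        rw [div_le_one (by positivity)]; linarith [Nat.cast_nonneg (α := ℝ) n]
      linarith
    have h4 : ‖u n‖^2 ≤ (m+1)/c := by
      rw [le_div_iff₀ hc]; linarith [mul_comm c (‖u n‖^2)]
    calc ‖u n‖ = Real.sqrt (‖u n‖^2) := by rw [Real.sqrt_sq (norm_nonneg _)]
      _ ≤ R₀ := Real.sqrt_le_sqrt h4
  have hR₀0 : 0 ≤ R₀ := Real.sqrt_nonneg _
  -- extract subsequence with B-Cauchy
  obtain ⟨φ, hφ, hBC⟩ := exists_cauchy_subseq hBc u R₀ hubd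
  -- the subsequence is Cauchy
  have key : ∀ p q : ℕ, c * ‖u p - u q‖^2 ≤
      2 * (qf A (u p) - m) + 2 * (qf A (u q) - m) + 2 * m * R₀ * ‖B (u p) - B (u q)‖ := by
    intro p q
    have e1 : qf A (u p + u q) + qf A (u p - u q) = 2 * qf A (u p) + 2 * qf A (u q) := by
      rw [qf_add hAsa, qf_sub hAsa]; ring
    have e2 : qf B (u p + u q) + qf B (u p - u q) = 2 * qf B (u p) + 2 * qf B (u q) := by
      rw [qf_add hBsa, qf_sub hBsa]; ring
    have e3 : m * qf B (u p + u q) ≤ qf A (u p + u q) :=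
      hlow _ (W.add_mem (huW p) (huW q))
    have e4 : qf B (u p - u q) ≤ ‖B (u p) - B (u q)‖ * (2 * R₀) := by
      have h5 : qf B (u p - u q) ≤ ‖B (u p - u q)‖ * ‖u p - u q‖ := qf_inner_le B _ _
      have h6 : ‖u p - u q‖ ≤ 2 * R₀ := by
        calc ‖u p - u q‖ ≤ ‖u p‖ + ‖u q‖ := norm_sub_le _ _
          _ ≤ 2 * R₀ := by linarith [hubd p, hubd q]
      have h7 : ‖B (u p - u q)‖ = ‖B (u p) - B (u q)‖ := by rw [map_sub]
      calc qf B (u p - u q) ≤ ‖B (u p - u q)‖ * ‖u p - u q‖ := h5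
        _ ≤ ‖B (u p) - B (u q)‖ * (2 * R₀) := by
            rw [h7]
            exact mul_le_mul_of_nonneg_left h6 (norm_nonneg _) |>.trans (le_refl _)
    have e5 : c * ‖u p - u q‖^2 ≤ qf A (u p - u q) := hA _
    have e6 : qf A (u p - u q) = 2 * qf A (u p) + 2 * qf A (u q) - qf A (u p + u q) := by
      linarith
    have e7 : qf B (u p + u q) = 2 * qf B (u p) + 2 * qf B (u q) - qf B (u p - u q) := by
      linarith
    rw [huB p, huB q] at e7
    nlinarith [mul_le_mul_of_nonneg_left e4 hm0]
  have hC : CauchySeq (fun n => u (φ n)) := by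
    rw [cauchySeq_iff_tendsto_dist_atTop_0]
    rw [← Filter.prod_atTop_atTop_eq]
    have hg : Filter.Tendsto (fun pq : ℕ × ℕ =>
        Real.sqrt ((2 * (qf A (u (φ pq.1)) - m) + 2 * (qf A (u (φ pq.2)) - m)
          + 2 * m * R₀ * ‖B (u (φ pq.1)) - B (u (φ pq.2))‖)/c))
          (Filter.atTop ×ˢ Filter.atTop) (nhds 0) := by
      have h1 : Filter.Tendsto (fun n : ℕ => qf A (u (φ n)) - m) Filter.atTop (nhds 0) := by
        apply tendsto_of_tendsto_of_tendsto_of_le_of_le (g := fun _ : ℕ => (0:ℝ))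
          (h := fun n : ℕ => 1/(n+1 : ℝ))
          (tendsto_const_nhds) (tendsto_one_div_add_atTop_nhds_zero_nat)
        · intro n
          show (0:ℝ) ≤ qf A (u (φ n)) - m
          linarith [huAlb (φ n)]
        · intro n
          show qf A (u (φ n)) - m ≤ 1/(n+1 : ℝ)
          have := huAub (φ n)
          have h2 : (1:ℝ)/(φ n + 1) ≤ 1/(n+1) := by
            apply one_div_le_one_div_of_le (by positivity)
            have h9 : (n:ℝ) ≤ (φ n : ℝ) := by exact_mod_cast hφ.le_apply (x := n)
            linarith
          linarith
      have h2 : Filter.Tendsto (fun pq : ℕ × ℕ => ‖B (u (φ pq.1)) - B (u (φ pq.2))‖)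
          (Filter.atTop ×ˢ Filter.atTop) (nhds 0) := by
        have h2' := cauchySeq_iff_tendsto_dist_atTop_0.1 hBC
        rw [← Filter.prod_atTop_atTop_eq] at h2'
        simpa [dist_eq_norm] using h2'
      have h3 : Filter.Tendsto (fun pq : ℕ × ℕ =>
          (2 * (qf A (u (φ pq.1)) - m) + 2 * (qf A (u (φ pq.2)) - m)
            + 2 * m * R₀ * ‖B (u (φ pq.1)) - B (u (φ pq.2))‖)/c)
            (Filter.atTop ×ˢ Filter.atTop) (nhds 0) := by
        have hfst := h1.comp (Filter.tendsto_fst (f := Filter.atTop (α := ℕ)) (g := Filter.atTop (α := ℕ)))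
        have hsnd := h1.comp (Filter.tendsto_snd (f := Filter.atTop (α := ℕ)) (g := Filter.atTop (α := ℕ)))
        have := ((hfst.const_mul 2).add (hsnd.const_mul 2)).add (h2.const_mul (2 * m * R₀))
        have h4 := this.div_const c
        simpa using h4
      have := h3.sqrt
      simpa [Real.sqrt_zero] using this
    apply squeeze_zero (fun pq => dist_nonneg) _ hg
    intro pq
    have hk := key (φ pq.1) (φ pq.2)
    rw [dist_eq_norm]
    have h5 : ‖u (φ pq.1) - u (φ pq.2)‖^2 ≤
        (2 * (qf A (u (φ pq.1)) - m) + 2 * (qf A (u (φ pq.2)) - m)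
          + 2 * m * R₀ * ‖B (u (φ pq.1)) - B (u (φ pq.2))‖)/c := by
      rw [le_div_iff₀ hc]; linarith [mul_comm c (‖u (φ pq.1) - u (φ pq.2)‖^2)]
    calc ‖u (φ pq.1) - u (φ pq.2)‖ = Real.sqrt (‖u (φ pq.1) - u (φ pq.2)‖^2) := by
          rw [Real.sqrt_sq (norm_nonneg _)]
      _ ≤ _ := Real.sqrt_le_sqrt h5
  obtain ⟨x, hx⟩ := cauchySeq_tendsto_of_complete hC
  have hxW : x ∈ W := hWc.mem_of_tendsto hx (Filter.Eventually.of_forall fun n => huW (φ n))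
  have hxB : qf B x = 1 := by
    have h1 : Filter.Tendsto (fun n => qf B (u (φ n))) Filter.atTop (nhds (qf B x)) :=
      ((qf_cont B).tendsto x).comp hx
    have h2 : (fun n => qf B (u (φ n))) = fun _ => (1:ℝ) := funext fun n => huB (φ n)
    rw [h2] at h1
    exact tendsto_nhds_unique h1 tendsto_const_nhds
  have hxA : qf A x = m := by
    have h1 : Filter.Tendsto (fun n => qf A (u (φ n))) Filter.atTop (nhds (qf A x)) :=
      ((qf_cont A).tendsto x).comp hx
    have h2 : Filter.Tendsto (fun n => qf A (u (φ n))) Filter.atTop (nhds m) := by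
      apply tendsto_of_tendsto_of_tendsto_of_le_of_le (g := fun _ : ℕ => m)
        (h := fun n : ℕ => m + 1/(n+1 : ℝ)) (tendsto_const_nhds)
      · have := tendsto_one_div_add_atTop_nhds_zero_nat (𝕜 := ℝ)
        have h3 := this.const_add m
        simpa using h3
      · intro n
        show m ≤ qf A (u (φ n))
        exact huAlb (φ n)
      · intro n
        show qf A (u (φ n)) ≤ m + 1/(n+1 : ℝ)
        have := huAub (φ n)
        have h2 : (1:ℝ)/(φ n + 1) ≤ 1/(n+1) := by
          apply one_div_le_one_div_of_le (by positivity)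
          have h9 : (n:ℝ) ≤ (φ n : ℝ) := by exact_mod_cast hφ.le_apply (x := n)
          linarith
        linarith
    exact tendsto_nhds_unique h1 h2
  have hxne : x ≠ 0 := by
    intro h0
    rw [h0, qf_zero] at hxB
    norm_num at hxB
  have hmpos : 0 < m := by
    have h1 : c * ‖x‖^2 ≤ qf A x := hA x
    have hx0 : 0 < ‖x‖ := norm_pos_iff.mpr hxne
    have h2 : 0 < ‖x‖^2 := by positivity
    nlinarith
  exact ⟨x, m, hxW, hxne, hmpos, by rw [hxA, hxB]; ring, hlow⟩

lemma expand_qf {T : H →L[ℂ] H} (hT : IsSelfAdjoint T) (x v : H) (t : ℝ) :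
    qf T (x + (t:ℂ) • v) = qf T x + t^2 * qf T v + 2 * t * (inner ℂ (T x) v : ℂ).re := by
  rw [qf_add hT, qf_smul_real, inner_smul_right]
  rw [Complex.re_ofReal_mul]; ring

/-- Euler–Lagrange: a constrained minimiser of the generalized Rayleigh quotient
is a global eigenvector of the pencil. -/
lemma eigen_of_min {A B : H →L[ℂ] H} (hAsa : IsSelfAdjoint A) (hBsa : IsSelfAdjoint B)
    {c : ℝ} (hc : 0 < c) (hA : ∀ u : H, c * ‖u‖ ^ 2 ≤ qf A u)
    {n : ℕ} {u : Fin n → H} {μ : Fin n → ℝ}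
    (hne : ∀ i, u i ≠ 0) (hμpos : ∀ i, 0 < μ i)
    (heig : ∀ i, A (u i) = ((μ i : ℝ):ℂ) • B (u i))
    (horth : ∀ i k, i ≠ k → (inner ℂ (A (u i)) (u k) : ℂ) = 0)
    {x : H} {m : ℝ} (hxW : x ∈ Wfam A u)
    (hmin : ∀ z ∈ Wfam A u, m * qf B z ≤ qf A z) (hat : qf A x = m * qf B x) :
    A x = ((m : ℝ):ℂ) • B x := by
  set W := Wfam A u with hW
  set w : H := A x - ((m:ℝ):ℂ) • B x with hw
  have hwv : ∀ v : H, (inner ℂ w v : ℂ) =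
      inner ℂ (A x) v - ((m:ℝ):ℂ) * inner ℂ (B x) v := by
    intro v
    rw [hw, inner_sub_left, inner_smul_left]
    norm_num
  -- step 1 : real part vanishes on W
  have step1 : ∀ v ∈ W, (inner ℂ w v : ℂ).re = 0 := by
    intro v hv
    set α : ℝ := (inner ℂ w v : ℂ).re with hα
    set β : ℝ := qf A v - m * qf B v with hβ
    have hβ0 : 0 ≤ β := by have := hmin v hv; rw [hβ]; linarith
    have hg : ∀ t : ℝ, 0 ≤ 2*t*α + t^2*β := by
      intro t
      have hmem : x + (t:ℂ) • v ∈ W := W.add_mem hxW (W.smul_mem _ hv)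
      have h := hmin _ hmem
      rw [expand_qf hAsa, expand_qf hBsa] at h
      have hαe : α = (inner ℂ (A x) v : ℂ).re - m * (inner ℂ (B x) v : ℂ).re := by
        rw [hα, hwv v, Complex.sub_re, Complex.re_ofReal_mul]
      rw [hβ] at hβ0 ⊢
      rw [hαe]
      nlinarith [h, hat]
    set s : ℝ := (β+1)⁻¹ with hsdef
    have hb1 : (0:ℝ) < β + 1 := by linarith
    have hspos : 0 < s := by rw [hsdef]; positivity
    have hs : s * (β+1) = 1 := by rw [hsdef]; field_simp
    have ht := hg (-(α*s))
    have hα2 : α^2 * (s*(1+s)) ≤ 0 := by nlinarith [ht, hs]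
    have h9 : 0 < s * (1 + s) := by nlinarith
    nlinarith [sq_nonneg α]
  -- step 2 : full inner ℂ product vanishes on W
  have step2 : ∀ v ∈ W, (inner ℂ w v : ℂ) = 0 := by
    intro v hv
    have h1 := step1 v hv
    have h2 := step1 (Complex.I • v) (W.smul_mem _ hv)
    rw [inner_smul_right] at h2
    have h3 : (Complex.I * inner ℂ w v).re = -(inner ℂ w v : ℂ).im := by
      rw [Complex.mul_re]; simp
    rw [h3] at h2
    exact Complex.ext h1 (by rw [Complex.zero_im]; linarith)
  -- step 3 : w lies in the span of the A (u i)
  haveI : FiniteDimensional ℂ (Submodule.span ℂ (Set.range fun i => A (u i))) :=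
    FiniteDimensional.span_of_finite ℂ (Set.finite_range _)
  have hspan : w ∈ Submodule.span ℂ (Set.range fun i => A (u i)) := by
    have hWorth : w ∈ Wᗮ := by
      rw [Submodule.mem_orthogonal]
      intro v hv
      rw [← inner_conj_symm v w, step2 v hv, map_zero]
    rw [hW, Wfam, Submodule.orthogonal_orthogonal] at hWorth
    exact hWorth
  obtain ⟨d, hd⟩ := (Submodule.mem_span_range_iff_exists_fun ℂ).1 hspan
  -- step 4 : w is orthogonal to each u k
  have hwu : ∀ k, (inner ℂ w (u k) : ℂ) = 0 := by
    intro k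
    rw [hwv]
    have h1 : (inner ℂ (A x) (u k) : ℂ) = 0 := by
      have hsym : (inner ℂ (A x) (u k) : ℂ) = inner ℂ x (A (u k)) := hAsa.isSymmetric x (u k)
      rw [hsym, ← inner_conj_symm x (A (u k)), mem_Wfam.1 hxW k, map_zero]
    have h2 : (inner ℂ (B x) (u k) : ℂ) = 0 := by
      have hBu : B (u k) = (((μ k:ℝ):ℂ))⁻¹ • A (u k) := by
        rw [heig k, smul_smul, inv_mul_cancel₀, one_smul]
        exact_mod_cast ne_of_gt (hμpos k)
      have hsym : (inner ℂ (B x) (u k) : ℂ) = inner ℂ x (B (u k)) := hBsa.isSymmetric x (u k)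
      rw [hsym, hBu, inner_smul_right, ← inner_conj_symm x (A (u k)),
        mem_Wfam.1 hxW k, map_zero, mul_zero]
    rw [h1, h2, mul_zero, sub_zero]
  -- step 5 : coefficients vanish
  have hdzero : ∀ k, d k = 0 := by
    intro k
    have h1 := hwu k
    rw [← hd, sum_inner] at h1
    have h2 : ∀ i, i ≠ k → (inner ℂ (d i • A (u i)) (u k) : ℂ) = 0 := by
      intro i hik
      rw [inner_smul_left, horth i k hik, mul_zero]
    rw [Finset.sum_eq_single k (fun i _ hik => h2 i hik) (by simp)] at h1
    rw [inner_smul_left] at h1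
    have h3 : (inner ℂ (A (u k)) (u k) : ℂ) ≠ 0 := by
      intro h0
      have h4 : qf A (u k) = 0 := by unfold qf; rw [h0]; simp
      have h5 := hA (u k)
      have h6 : 0 < ‖u k‖ := norm_pos_iff.mpr (hne k)
      have h7 := mul_pos hc (pow_pos h6 2)
      linarith
    have := mul_eq_zero.1 h1
    rcases this with h | h
    · simpa using h
    · exact absurd h h3
  have hwzero : w = 0 := by
    rw [← hd]
    apply Finset.sum_eq_zero
    intro i _
    rw [hdzero i, zero_smul]
  rw [hw, sub_eq_zero] at hwzero
  exact hwzero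

/-- spec for a family of generalized eigenvectors built by successive minimization -/
def FamSpec (A B : H →L[ℂ] H) (n : ℕ) (u : ℕ → H) (μ : ℕ → ℝ) : Prop :=
  ∀ i < n, u i ≠ 0 ∧ 0 < μ i ∧ A (u i) = ((μ i : ℝ):ℂ) • B (u i) ∧
    (∀ k, k < i → (inner ℂ (A (u k)) (u i) : ℂ) = 0) ∧
    qf A (u i) = μ i * qf B (u i) ∧
    (∀ z : H, (∀ k, k < i → (inner ℂ (A (u k)) z : ℂ) = 0) → μ i * qf B z ≤ qf A z)

lemma pairwise_orth {A : H →L[ℂ] H} (hAsa : IsSelfAdjoint A) {n : ℕ} {u : ℕ → H}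
    (htri : ∀ i < n, ∀ k, k < i → (inner ℂ (A (u k)) (u i) : ℂ) = 0)
    {i k : ℕ} (hi : i < n) (hk : k < n) (hik : i ≠ k) :
    (inner ℂ (A (u i)) (u k) : ℂ) = 0 := by
  rcases lt_or_gt_of_ne hik with h | h
  · exact htri k hk i h
  · have hsym : (inner ℂ (A (u i)) (u k) : ℂ) = inner ℂ (u i) (A (u k)) :=
      hAsa.isSymmetric (u i) (u k)
    rw [hsym, ← inner_conj_symm (u i) (A (u k)), htri i hi k h, map_zero]

lemma exists_fam (hH : ¬ FiniteDimensional ℂ H) {A B : H →L[ℂ] H}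
    (hAsa : IsSelfAdjoint A) {c : ℝ} (hc : 0 < c) (hA : ∀ u : H, c * ‖u‖ ^ 2 ≤ qf A u)
    (hBc : IsCompactOperator B) (hBsa : IsSelfAdjoint B)
    (hBpos : ∀ u : H, u ≠ 0 → 0 < qf B u) :
    ∀ n : ℕ, ∃ (u : ℕ → H) (μ : ℕ → ℝ), FamSpec A B n u μ := by
  intro n
  induction n with
  | zero => exact ⟨fun _ => 0, fun _ => 0, fun i hi => absurd hi (Nat.not_lt_zero i)⟩
  | succ n ih =>
    obtain ⟨u, μ, hfam⟩ := ih
    set ufin : Fin n → H := fun k => u k with hufin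
    have htri : ∀ i < n, ∀ k, k < i → (inner ℂ (A (u k)) (u i) : ℂ) = 0 :=
      fun i hi k hk => (hfam i hi).2.2.2.1 k hk
    obtain ⟨x, m, hxW, hxne, hmpos, hat, hlow⟩ :=
      exists_pencil_min hAsa hc hA hBc hBsa hBpos (Wfam A ufin)
        (Wfam_isClosed A ufin) (Wfam_ne_bot hH A ufin)
    have heigx : A x = ((m : ℝ):ℂ) • B x := by
      refine eigen_of_min hAsa hBsa hc hA (u := ufin) (μ := fun k : Fin n => μ k)
        (fun i => (hfam i i.2).1) (fun i => (hfam i i.2).2.1)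
        (fun i => (hfam i i.2).2.2.1) ?_ hxW hlow hat
      intro i k hik
      exact pairwise_orth hAsa htri i.2 k.2 (fun h => hik (Fin.ext h))
    refine ⟨Function.update u n x, Function.update μ n m, ?_⟩
    intro i hi
    rcases Nat.lt_or_ge i n with hin | hin
    · have hieq : Function.update u n x i = u i := Function.update_of_ne (by omega) _ _
      have hμeq : Function.update μ n m i = μ i := Function.update_of_ne (by omega) _ _
      obtain ⟨h1, h2, h3, h4, h5, h6⟩ := hfam i hin
      refine ⟨by rw [hieq]; exact h1, by rw [hμeq]; exact h2, ?_, ?_, ?_, ?_⟩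
      · rw [hieq, hμeq]; exact h3
      · intro k hk
        rw [hieq, Function.update_of_ne (by omega : k ≠ n)]
        exact h4 k hk
      · rw [hieq, hμeq]; exact h5
      · intro z hz
        rw [hμeq]
        refine h6 z ?_
        intro k hk
        have := hz k hk
        rwa [Function.update_of_ne (by omega : k ≠ n)] at this
    · have hieqn : i = n := by omega
      subst hieqn
      have hieq : Function.update u i x i = x := Function.update_self _ _ _
      have hμeq : Function.update μ i m i = m := Function.update_self _ _ _
      refine ⟨by rw [hieq]; exact hxne, by rw [hμeq]; exact hmpos, ?_, ?_, ?_, ?_⟩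
      · rw [hieq, hμeq]; exact heigx
      · intro k hk
        rw [hieq, Function.update_of_ne (by omega : k ≠ i)]
        exact mem_Wfam.1 hxW ⟨k, hk⟩
      · rw [hieq, hμeq]; exact hat
      · intro z hz
        rw [hμeq]
        refine hlow z (mem_Wfam.2 ?_)
        intro k
        have := hz k k.2
        rwa [Function.update_of_ne (by omega : (k:ℕ) ≠ i)] at this
  
lemma fam_mono {A B : H →L[ℂ] H} {n : ℕ} {u : ℕ → H} {μ : ℕ → ℝ}
    (hfam : FamSpec A B n u μ) (hBpos : ∀ v : H, v ≠ 0 → 0 < qf B v)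
    {i k : ℕ} (hik : i ≤ k) (hk : k < n) : μ i ≤ μ k := by
  rcases eq_or_lt_of_le hik with h | h
  · rw [h]
  · obtain ⟨hk1, hk2, hk3, hk4, hk5, hk6⟩ := hfam k hk
    have hi6 := (hfam i (lt_trans h hk)).2.2.2.2.2
    have h1 : μ i * qf B (u k) ≤ qf A (u k) := by
      refine hi6 (u k) ?_
      intro l hl
      exact hk4 l (lt_trans hl h)
    rw [hk5] at h1
    have h2 : 0 < qf B (u k) := hBpos _ hk1
    exact le_of_mul_le_mul_right (by linarith) h2

lemma minmaxVal_eq_qf (A B : H →L[ℂ] H) (j : ℕ) :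
    minmaxVal A B j = ⨅ V : {V : Submodule ℂ H // Module.finrank ℂ V = j},
      ⨆ u : {u : H // u ∈ (V : Submodule ℂ H) ∧ u ≠ 0}, qf A u / qf B u := rfl

lemma qf_sum_expand {T : H →L[ℂ] H} {n : ℕ} (v : Fin n → H) (d : Fin n → ℂ)
    (horth : ∀ i k : Fin n, i ≠ k → (inner ℂ (T (v i)) (v k) : ℂ) = 0) :
    qf T (∑ i, d i • v i) = ∑ i, ‖d i‖^2 * qf T (v i) := by
  unfold qf
  have hT : T (∑ i, d i • v i) = ∑ i, d i • T (v i) := by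
    rw [map_sum]
    exact Finset.sum_congr rfl (fun i _ => map_smul T _ _)
  rw [hT, sum_inner]
  have hterm : ∀ i : Fin n, (inner ℂ (d i • T (v i)) (∑ k, d k • v k) : ℂ)
      = ((Complex.normSq (d i) : ℝ) : ℂ) * inner ℂ (T (v i)) (v i) := by
    intro i
    rw [inner_smul_left, inner_sum]
    rw [Finset.sum_eq_single i]
    · rw [inner_smul_right, ← mul_assoc, ← Complex.normSq_eq_conj_mul_self]
    · intro k _ hk
      rw [inner_smul_right, horth i k (fun h => hk h.symm), mul_zero]
    · intro h
      exact absurd (Finset.mem_univ i) h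
  rw [Finset.sum_congr rfl (fun i _ => hterm i), Complex.re_sum]
  apply Finset.sum_congr rfl
  intro i _
  rw [Complex.re_ofReal_mul, Complex.sq_norm]

lemma bddAbove_ratio (A B : H →L[ℂ] H) (hBpos : ∀ v : H, v ≠ 0 → 0 < qf B v)
    (V : Submodule ℂ H) (hfd : FiniteDimensional ℂ V) :
    BddAbove (Set.range fun x : {x : H // x ∈ V ∧ x ≠ 0} => qf A x / qf B x) := by
  haveI := hfd
  set S : Set V := Metric.sphere 0 1 with hS
  have hSc : IsCompact S := isCompact_sphere 0 1
  set g : V → ℝ := fun y => qf A (y:H) / qf B (y:H) with hg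
  have hne : ∀ y : V, y ∈ S → ((y:H) ≠ 0) := by
    intro y hy
    have h1 : ‖(y:H)‖ = 1 := by
      have := Metric.mem_sphere.1 hy
      rw [dist_zero_right] at this
      simpa using this
    intro h0
    rw [h0] at h1; simp at h1
  have hgc : ContinuousOn g S := by
    apply ContinuousOn.div
    · exact ((qf_cont A).comp continuous_subtype_val).continuousOn
    · exact ((qf_cont B).comp continuous_subtype_val).continuousOn
    · intro y hy
      exact ne_of_gt (hBpos _ (hne y hy))
  obtain ⟨C, hC⟩ := (hSc.image_of_continuousOn hgc).bddAbove
  refine ⟨C, ?_⟩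
  rintro r ⟨x, rfl⟩
  obtain ⟨xh, hxV, hxne⟩ := x
  simp only
  have hx0 : (0:ℝ) < ‖xh‖ := norm_pos_iff.mpr hxne
  set t : ℝ := ‖xh‖⁻¹ with htdef
  have ht0 : 0 < t := by positivity
  set y : V := (t:ℂ) • (⟨xh, hxV⟩ : V) with hy
  have hyS : y ∈ S := by
    rw [hS, Metric.mem_sphere, dist_zero_right, hy, norm_smul]
    have h1 : ‖((t:ℝ):ℂ)‖ = t := by rw [Complex.norm_real]; exact abs_of_pos ht0
    rw [h1]
    have h2 : ‖(⟨xh, hxV⟩ : V)‖ = ‖xh‖ := rfl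
    rw [h2, htdef, inv_mul_cancel₀ (ne_of_gt hx0)]
  have hgy : g y = qf A xh / qf B xh := by
    rw [hg]
    have hcoe : ((y : V) : H) = (t:ℂ) • xh := rfl
    simp only [hcoe]
    rw [qf_smul_real, qf_smul_real]
    rw [mul_div_mul_left _ _ (by positivity : (t:ℝ)^2 ≠ 0)]
  calc qf A xh / qf B xh = g y := hgy.symm
    _ ≤ C := hC ⟨y, hyS, rfl⟩

lemma sup_ratio_nonneg (A B : H →L[ℂ] H) {c : ℝ} (hc : 0 < c)
    (hA : ∀ u : H, c * ‖u‖ ^ 2 ≤ qf A u) (hBpos : ∀ v : H, v ≠ 0 → 0 < qf B v)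
    (V : Submodule ℂ H) :
    0 ≤ ⨆ x : {x : H // x ∈ V ∧ x ≠ 0}, qf A x / qf B x := by
  apply Real.iSup_nonneg
  intro x
  apply div_nonneg
  · exact le_trans (by positivity) (hA x)
  · exact le_of_lt (hBpos _ x.2.2)

lemma minmax_eq {A B : H →L[ℂ] H}
    (hAsa : IsSelfAdjoint A) {c : ℝ} (hc : 0 < c) (hA : ∀ u : H, c * ‖u‖ ^ 2 ≤ qf A u)
    (hBsa : IsSelfAdjoint B) (hBpos : ∀ v : H, v ≠ 0 → 0 < qf B v)
    {j : ℕ} (hj : 1 ≤ j) {u : ℕ → H} {μ : ℕ → ℝ} (hfam : FamSpec A B j u μ) :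
    minmaxVal A B j = μ (j-1) := by
  rw [minmaxVal_eq_qf]
  set L := μ (j-1) with hL
  set uf : Fin j → H := fun i => u i with huf
  have htri : ∀ i < j, ∀ k, k < i → (inner ℂ (A (u k)) (u i) : ℂ) = 0 :=
    fun i hi k hk => (hfam i hi).2.2.2.1 k hk
  have horthA : ∀ i k : Fin j, i ≠ k → (inner ℂ (A (uf i)) (uf k) : ℂ) = 0 := by
    intro i k hik
    exact pairwise_orth hAsa htri i.2 k.2 (fun h => hik (Fin.ext h))
  have hne0 : ∀ i : Fin j, uf i ≠ 0 := fun i => (hfam i i.2).1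
  have hμpos : ∀ i : Fin j, 0 < μ i := fun i => (hfam i i.2).2.1
  have heig : ∀ i : Fin j, A (uf i) = ((μ i : ℝ):ℂ) • B (uf i) :=
    fun i => (hfam i i.2).2.2.1
  have horthB : ∀ i k : Fin j, i ≠ k → (inner ℂ (B (uf i)) (uf k) : ℂ) = 0 := by
    intro i k hik
    have hBu : B (uf i) = (((μ (i:ℕ) :ℝ):ℂ))⁻¹ • A (uf i) := by
      rw [heig i, smul_smul, inv_mul_cancel₀, one_smul]
      exact_mod_cast ne_of_gt (hμpos i)
    rw [hBu, inner_smul_left, horthA i k hik, mul_zero]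
  have hAself : ∀ i : Fin j, (inner ℂ (A (uf i)) (uf i) : ℂ) ≠ 0 := by
    intro i h0
    have h4 : qf A (uf i) = 0 := by unfold qf; rw [h0]; simp
    have h5 := hA (uf i)
    have h6 : 0 < ‖uf i‖ := norm_pos_iff.mpr (hne0 i)
    have h7 := mul_pos hc (pow_pos h6 2)
    linarith
  -- linear independence and the span
  have hli : LinearIndependent ℂ uf := by
    rw [linearIndependent_iff']
    intro s g hsum i hi
    have h1 : (inner ℂ (A (uf i)) (∑ k ∈ s, g k • uf k) : ℂ) = 0 := by rw [hsum, inner_zero_right]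
    rw [inner_sum] at h1
    rw [Finset.sum_eq_single_of_mem i hi] at h1
    · rw [inner_smul_right] at h1
      rcases mul_eq_zero.1 h1 with h | h
      · exact h
      · exact absurd h (hAself i)
    · intro k _ hk
      rw [inner_smul_right, horthA i k (fun h => hk h.symm), mul_zero]
  set V₀ : Submodule ℂ H := Submodule.span ℂ (Set.range uf) with hV₀
  have hfr : Module.finrank ℂ V₀ = j := by
    rw [hV₀, finrank_span_eq_card hli, Fintype.card_fin]
  haveI hVnonempty : Nonempty {V : Submodule ℂ H // Module.finrank ℂ V = j} := ⟨⟨V₀, hfr⟩⟩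
  have hbddBelow : BddBelow (Set.range fun V : {V : Submodule ℂ H // Module.finrank ℂ V = j} =>
      ⨆ x : {x : H // x ∈ (V : Submodule ℂ H) ∧ x ≠ 0}, qf A x / qf B x) := by
    refine ⟨0, ?_⟩
    rintro r ⟨V, rfl⟩
    exact sup_ratio_nonneg A B hc hA hBpos V
  apply le_antisymm
  -- upper bound : use V₀
  · have hsup : (⨆ x : {x : H // x ∈ V₀ ∧ x ≠ 0}, qf A x / qf B x) ≤ L := by
      have hne1 : Nonempty {x : H // x ∈ V₀ ∧ x ≠ 0} := by
        refine ⟨⟨uf ⟨0, by omega⟩, Submodule.subset_span ⟨_, rfl⟩, hne0 _⟩⟩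
      apply ciSup_le
      intro x
      obtain ⟨xh, hxV, hxne⟩ := x
      simp only
      obtain ⟨d, hd⟩ := (Submodule.mem_span_range_iff_exists_fun ℂ).1 hxV
      have hqA : qf A xh = ∑ i, ‖d i‖^2 * qf A (uf i) := by
        rw [← hd]; exact qf_sum_expand uf d horthA
      have hqB : qf B xh = ∑ i, ‖d i‖^2 * qf B (uf i) := by
        rw [← hd]; exact qf_sum_expand uf d horthB
      have hBpos' : 0 < qf B xh := hBpos _ hxne
      rw [div_le_iff₀ hBpos', hqA, hqB, Finset.mul_sum]
      apply Finset.sum_le_sum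
      intro i _
      have h1 : qf A (uf i) = μ i * qf B (uf i) := (hfam i i.2).2.2.2.2.1
      have h2 : μ (i:ℕ) ≤ L := by
        rw [hL]; exact fam_mono hfam hBpos (by omega) (by omega)
      have h3 : 0 < qf B (uf i) := hBpos _ (hne0 i)
      have h4 : (0:ℝ) ≤ ‖d i‖^2 := by positivity
      rw [h1]
      calc ‖d i‖^2 * (μ (i:ℕ) * qf B (uf i)) ≤ ‖d i‖^2 * (L * qf B (uf i)) :=
            mul_le_mul_of_nonneg_left (mul_le_mul_of_nonneg_right h2 (le_of_lt h3)) h4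
        _ = L * (‖d i‖^2 * qf B (uf i)) := by ring
    calc (⨅ V : {V : Submodule ℂ H // Module.finrank ℂ V = j},
        ⨆ x : {x : H // x ∈ (V : Submodule ℂ H) ∧ x ≠ 0}, qf A x / qf B x)
        ≤ ⨆ x : {x : H // x ∈ V₀ ∧ x ≠ 0}, qf A x / qf B x := ciInf_le hbddBelow ⟨V₀, hfr⟩
      _ ≤ L := hsup
  -- lower bound : every j-dimensional V admits a vector in W_{j-1}
  · apply le_ciInf
    intro Vp
    obtain ⟨V, hV⟩ := Vp
    simp only
    haveI hfd : FiniteDimensional ℂ V := FiniteDimensional.of_finrank_pos (by omega)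
    set φ : V →ₗ[ℂ] (Fin (j-1) → ℂ) :=
      LinearMap.pi (fun k : Fin (j-1) => (innerSL ℂ (A (u k))).toLinearMap.comp V.subtype) with hφ
    have hker : LinearMap.ker φ ≠ ⊥ := by
      intro hbot
      have h1 := LinearMap.finrank_range_add_finrank_ker φ
      rw [hbot, finrank_bot, hV] at h1
      have h2 : Module.finrank ℂ (LinearMap.range φ) ≤ j - 1 := by
        have h3 := Submodule.finrank_le (LinearMap.range φ)
        simpa using h3
      omega
    obtain ⟨y, hyker, hyne⟩ := Submodule.ne_bot_iff _ |>.1 hker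
    have hyV : (y:H) ∈ V := y.2
    have hyne' : (y:H) ≠ 0 := fun h0 => hyne (Subtype.ext h0)
    have hz : ∀ k, k < j - 1 → (inner ℂ (A (u k)) ((y:H)) : ℂ) = 0 := by
      intro k hk
      have h1 : φ y = 0 := hyker
      have h2 := congr_fun h1 ⟨k, hk⟩
      exact h2
    have hmin := (hfam (j-1) (by omega)).2.2.2.2.2 (y:H) hz
    have hBpos' : 0 < qf B (y:H) := hBpos _ hyne'
    have hLle : L ≤ qf A (y:H) / qf B (y:H) := by
      rw [le_div_iff₀ hBpos']
      exact hmin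
    calc L ≤ qf A (y:H) / qf B (y:H) := hLle
      _ ≤ ⨆ x : {x : H // x ∈ V ∧ x ≠ 0}, qf A x / qf B x :=
          le_ciSup (bddAbove_ratio A B hBpos V hfd) ⟨(y:H), hyV, hyne'⟩

end Helpers

theorem stmt4 {H : Type*} [NormedAddCommGroup H] [InnerProductSpace ℂ H] [CompleteSpace H]
    [TopologicalSpace.SeparableSpace H] (hH : ¬ FiniteDimensional ℂ H)
    (A : H →L[ℂ] H) (hAsa : IsSelfAdjoint A) (hAcoer : OpCoercive A)
    (B : H →L[ℂ] H) (hBc : IsCompactOperator B) (hBsa : IsSelfAdjoint B)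
    (hBpos : ∀ u : H, u ≠ 0 → 0 < (inner ℂ (B u) u : ℂ).re) :
    (∀ j : ℕ, 1 ≤ j → 0 < minmaxVal A B j) ∧
    (∀ j : ℕ, 1 ≤ j → minmaxVal A B j ≤ minmaxVal A B (j + 1)) ∧
    (∀ j : ℕ, 1 ≤ j → ∃ u : H, u ≠ 0 ∧ A u = ((minmaxVal A B j : ℝ) : ℂ) • B u) ∧
    Filter.Tendsto (fun j : ℕ => minmaxVal A B j) Filter.atTop Filter.atTop := by
  obtain ⟨c, hc, hA⟩ := hAcoer
  have hA' : ∀ u : H, c * ‖u‖ ^ 2 ≤ qf A u := hA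
  have hBpos' : ∀ u : H, u ≠ 0 → 0 < qf B u := hBpos
  -- part (a)
  have hpos : ∀ j : ℕ, 1 ≤ j → 0 < minmaxVal A B j := by
    intro j hj
    obtain ⟨u, μ, hfam⟩ := exists_fam hH hAsa hc hA' hBc hBsa hBpos' j
    rw [minmax_eq hAsa hc hA' hBsa hBpos' hj hfam]
    exact (hfam (j-1) (by omega)).2.1
  -- part (b)
  have hmono : ∀ j : ℕ, 1 ≤ j → minmaxVal A B j ≤ minmaxVal A B (j + 1) := by
    intro j hj
    obtain ⟨u, μ, hfam⟩ := exists_fam hH hAsa hc hA' hBc hBsa hBpos' (j+1)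
    have hfamj : FamSpec A B j u μ := fun i hi => hfam i (by omega)
    rw [minmax_eq hAsa hc hA' hBsa hBpos' hj hfamj,
      minmax_eq hAsa hc hA' hBsa hBpos' (by omega) hfam]
    have h1 : j + 1 - 1 = j := by omega
    rw [h1]
    exact fam_mono hfam hBpos' (by omega) (by omega)
  -- part (c)
  have heigen : ∀ j : ℕ, 1 ≤ j →
      ∃ u : H, u ≠ 0 ∧ A u = ((minmaxVal A B j : ℝ) : ℂ) • B u := by
    intro j hj
    obtain ⟨u, μ, hfam⟩ := exists_fam hH hAsa hc hA' hBc hBsa hBpos' j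
    refine ⟨u (j-1), (hfam (j-1) (by omega)).1, ?_⟩
    rw [minmax_eq hAsa hc hA' hBsa hBpos' hj hfam]
    exact (hfam (j-1) (by omega)).2.2.1
  refine ⟨hpos, hmono, heigen, ?_⟩
  -- chain of monotonicity
  have hchain : ∀ i k : ℕ, 1 ≤ i → i ≤ k → minmaxVal A B i ≤ minmaxVal A B k := by
    intro i k hi hik
    induction k, hik using Nat.le_induction with
    | base => exact le_refl _
    | succ k hk ih => exact le_trans ih (hmono k (by omega))
  -- unboundedness
  have hunbdd : ∀ M : ℝ, ∃ j : ℕ, 1 ≤ j ∧ M < minmaxVal A B j := by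
    intro M
    set M' : ℝ := max M 1 with hM'
    have hM'1 : (1:ℝ) ≤ M' := le_max_right _ _
    have hM'0 : (0:ℝ) < M' := by linarith
    set R₀ : ℝ := Real.sqrt (1/c) with hR₀def
    have hR₀pos : 0 < R₀ := Real.sqrt_pos.2 (by positivity)
    set ε : ℝ := 1/(2*M'*R₀) with hεdef
    have hεpos : 0 < ε := by positivity
    obtain ⟨t, htfin, htnet⟩ := exists_finite_net hBc R₀ ε (le_of_lt hR₀pos) hεpos
    set n : ℕ := htfin.toFinset.card + 1 with hn
    obtain ⟨u, μ, hfam⟩ := exists_fam hH hAsa hc hA' hBc hBsa hBpos' n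
    by_contra hcon
    push_neg at hcon
    -- all the eigenvalues μ i, i < n, are ≤ M'
    have hμle : ∀ i : ℕ, i < n → μ i ≤ M' := by
      intro i hi
      have hfami : FamSpec A B (i+1) u μ := fun l hl => hfam l (by omega)
      have h1 := hcon (i+1) (by omega)
      rw [minmax_eq hAsa hc hA' hBsa hBpos' (by omega) hfami] at h1
      have h2 : i + 1 - 1 = i := by omega
      rw [h2] at h1
      calc μ i ≤ M := h1
        _ ≤ M' := le_max_left _ _
    -- normalized eigenvectors
    set f : Fin n → H := fun i =>
      ((1 / Real.sqrt (qf A (u i)) : ℝ) : ℂ) • u i with hf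
    have hqA : ∀ i : ℕ, i < n → 0 < qf A (u i) := by
      intro i hi
      have h1 := hA' (u i)
      have h2 : 0 < ‖u i‖ := norm_pos_iff.mpr (hfam i hi).1
      have h3 := mul_pos hc (pow_pos h2 2)
      linarith
    have hfA : ∀ i : Fin n, qf A (f i) = 1 := by
      intro i
      rw [hf]
      simp only
      rw [qf_smul_real, div_pow, one_pow, Real.sq_sqrt (le_of_lt (hqA i i.2))]
      rw [one_div, inv_mul_cancel₀ (ne_of_gt (hqA i i.2))]
    have hfB : ∀ i : Fin n, 1/M' ≤ qf B (f i) := by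
      intro i
      have heq : qf A (f i) = μ i * qf B (f i) := by
        have h1 := (hfam i i.2).2.2.2.2.1
        rw [hf]
        simp only
        rw [qf_smul_real, qf_smul_real, h1]
        ring
      have hμp := (hfam i i.2).2.1
      have h2 : qf B (f i) = 1 / μ i := by
        rw [← hfA i, heq]
        field_simp
      rw [h2]
      apply one_div_le_one_div_of_le hμp (hμle i i.2)
    have hfnorm : ∀ i : Fin n, ‖f i‖ ≤ R₀ := by
      intro i
      have h1 := hA' (f i)
      rw [hfA i] at h1
      have h2 : ‖f i‖^2 ≤ 1/c := by
        rw [le_div_iff₀ hc]; linarith [mul_comm c (‖f i‖^2)]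
      calc ‖f i‖ = Real.sqrt (‖f i‖^2) := (Real.sqrt_sq (norm_nonneg _)).symm
        _ ≤ R₀ := Real.sqrt_le_sqrt h2
    -- B-orthogonality of distinct normalized eigenvectors
    have htri : ∀ i < n, ∀ k, k < i → (inner ℂ (A (u k)) (u i) : ℂ) = 0 :=
      fun i hi k hk => (hfam i hi).2.2.2.1 k hk
    have horthB : ∀ i k : Fin n, i ≠ k → (inner ℂ (B (f i)) (f k) : ℂ) = 0 := by
      intro i k hik
      have h0 : (inner ℂ (A (u i)) (u k) : ℂ) = 0 :=
        pairwise_orth hAsa htri i.2 k.2 (fun h => hik (Fin.ext h))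
      have hBu : B (u (i:ℕ)) = (((μ (i:ℕ) :ℝ):ℂ))⁻¹ • A (u (i:ℕ)) := by
        rw [(hfam i i.2).2.2.1, smul_smul, inv_mul_cancel₀, one_smul]
        exact_mod_cast ne_of_gt ((hfam i i.2).2.1)
      rw [hf]
      simp only
      rw [map_smul, inner_smul_left, inner_smul_right, hBu, inner_smul_left, h0]
      simp
    -- pigeonhole on the net
    have hchoice : ∀ i : Fin n, ∃ y ∈ htfin.toFinset, ‖B (f i) - y‖ < ε := by
      intro i
      obtain ⟨y, hyt, hy⟩ := htnet (f i) (hfnorm i)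
      exact ⟨y, htfin.mem_toFinset.2 hyt, hy⟩
    choose g hg1 hg2 using hchoice
    have hcard : Fintype.card {y // y ∈ htfin.toFinset} < Fintype.card (Fin n) := by
      rw [Fintype.card_coe, Fintype.card_fin, hn]
      omega
    obtain ⟨i, k, hik, hgik⟩ := Fintype.exists_ne_map_eq_of_card_lt
      (fun i : Fin n => (⟨g i, hg1 i⟩ : {y // y ∈ htfin.toFinset})) hcard
    have hgik' : g i = g k := congrArg Subtype.val hgik
    have hdist : ‖B (f i) - B (f k)‖ < 2 * ε := by
      calc ‖B (f i) - B (f k)‖ ≤ ‖B (f i) - g i‖ + ‖g i - B (f k)‖ := by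
            have := norm_sub_le_norm_sub_add_norm_sub (B (f i)) (g i) (B (f k))
            exact this
        _ < ε + ε := by
            apply add_lt_add (hg2 i)
            rw [norm_sub_rev, hgik']
            exact hg2 k
        _ = 2 * ε := by ring
    -- but they are far apart
    have hfar : 1/M' ≤ ‖B (f i) - B (f k)‖ * R₀ := by
      have h1 : (inner ℂ (B (f i)) (f i) : ℂ) =
          inner ℂ (B (f i) - B (f k)) (f i) + inner ℂ (B (f k)) (f i) := by
        rw [inner_sub_left]; ring
      have h2 : (inner ℂ (B (f k)) (f i) : ℂ) = 0 := horthB k i (Ne.symm hik)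
      have h3 : qf B (f i) = (inner ℂ (B (f i) - B (f k)) (f i) : ℂ).re := by
        unfold qf
        rw [h1, h2, add_zero]
      have h4 : (inner ℂ (B (f i) - B (f k)) (f i) : ℂ).re ≤ ‖B (f i) - B (f k)‖ * ‖f i‖ :=
        le_trans (re_le_norm' _) (norm_inner_le_norm _ _)
      have h5 : ‖B (f i) - B (f k)‖ * ‖f i‖ ≤ ‖B (f i) - B (f k)‖ * R₀ :=
        mul_le_mul_of_nonneg_left (hfnorm i) (norm_nonneg _)
      calc 1/M' ≤ qf B (f i) := hfB i
        _ = _ := h3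
        _ ≤ ‖B (f i) - B (f k)‖ * ‖f i‖ := h4
        _ ≤ _ := h5
    have hcontr : ‖B (f i) - B (f k)‖ * R₀ < 1/M' := by
      calc ‖B (f i) - B (f k)‖ * R₀ < 2 * ε * R₀ :=
            mul_lt_mul_of_pos_right hdist hR₀pos
        _ = 1/M' := by
            rw [hεdef]
            field_simp
    linarith
  rw [Filter.tendsto_atTop]
  intro M
  obtain ⟨j₀, hj₀1, hj₀M⟩ := hunbdd M
  rw [Filter.eventually_atTop]
  exact ⟨j₀, fun j hj => le_of_lt (lt_of_lt_of_le hj₀M (hchain j₀ j hj₀1 hj))⟩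
end
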